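/- arXiv:1904.04979 — 2 statements merged into one kernel-verified Lean document; each statement's English description precedes it below -/
import Mathlib

section
/- Let G be a finite group, L a finite G-lattice with a family of nonempty sublattices L_H as in the lattice Burnside ring setting, H ≤ G, and (K,s),(U,t) ∈ S(H,M_L). Set inv_U((H/K)_s)_{≥t} = {hK ∈ H/K : U ≤ ʰK and t ≤ ʰs}. Then for any subgroup F of W_H(U,t), one has Σ_{rU ∈ F} #{hK ∈ inv_U((H/K)_s)_{≥t} : ⟨r⟩U ≤ ʰK} ≡ 0 (mod |F|). -/
set_option linter.unusedSectionVars false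
set_option linter.unusedVariables false

open scoped Classical

namespace LB
noncomputable section

variable {G : Type*} [Group G]

/-- The conjugate subgroup `ᵍK = gKg⁻¹`. -/
def conjS (g : G) (K : Subgroup G) : Subgroup G :=
  K.map ((MulAut.conj g).toMonoidHom)

theorem mem_conjS {g x : G} {K : Subgroup G} : x ∈ conjS g K ↔ g⁻¹ * x * g ∈ K := by
  unfold conjS
  rw [Subgroup.mem_map]
  constructor
  · rintro ⟨y, hy, rfl⟩
    have h2 : g⁻¹ * ((MulAut.conj g).toMonoidHom y) * g = y := by
      simp only [MulEquiv.coe_toMonoidHom, MulAut.conj_apply]; group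
    rw [h2]; exact hy
  · intro h
    refine ⟨g⁻¹ * x * g, h, ?_⟩
    simp only [MulEquiv.coe_toMonoidHom, MulAut.conj_apply]; group

theorem conjS_mono (g : G) {K K' : Subgroup G} (h : K ≤ K') : conjS g K ≤ conjS g K' :=
  Subgroup.map_mono h

theorem conjS_one (K : Subgroup G) : conjS 1 K = K := by
  ext x; simp [mem_conjS]

theorem conjS_mul (g r : G) (K : Subgroup G) : conjS g (conjS r K) = conjS (g * r) K := by
  ext x
  rw [mem_conjS, mem_conjS, mem_conjS,
    show r⁻¹ * (g⁻¹ * x * g) * r = (g * r)⁻¹ * x * (g * r) by group]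

/-- The Möbius function of a finite partial order. -/
def mob {α : Type*} [PartialOrder α] [Finite α] (a b : α) : ℤ :=
  letI : Fintype α := Fintype.ofFinite α
  letI : DecidableRel ((· < ·) : α → α → Prop) := Classical.decRel _
  letI : LocallyFiniteOrder α := Fintype.toLocallyFiniteOrder
  IncidenceAlgebra.mu ℤ a b

/-- A family of nonempty sublattices `L_H ⊆ L` of a finite `G`-lattice `L`
(for `H ≤ G`) satisfying the conditions of Proposition 4.2 of the paper; the binary
relation of `L` is required to be invariant under `G` (field `smul_le`).
The data `top K` is the greatest element `sup L_K` of the sublattice `L_K`. -/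
structure SubLatticeFamily (G : Type*) [Group G] (L : Type*) [Lattice L] [MulAction G L] where
  smul_le : ∀ (g : G) (x y : L), x ≤ y → g • x ≤ g • y
  S : Subgroup G → Set L
  nonempty : ∀ K, (S K).Nonempty
  inf_mem : ∀ (K : Subgroup G) {a b : L}, a ∈ S K → b ∈ S K → a ⊓ b ∈ S K
  sup_mem : ∀ (K : Subgroup G) {a b : L}, a ∈ S K → b ∈ S K → a ⊔ b ∈ S K
  top : Subgroup G → L
  top_mem : ∀ K, top K ∈ S K
  le_top : ∀ K, ∀ a ∈ S K, a ≤ top K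
  conj_eq : ∀ (g : G) (H : Subgroup G), S (conjS g H) = (g • ·) '' S H
  invariant : ∀ (H : Subgroup G), ∀ h ∈ H, ∀ s ∈ S H, h • s = s
  res_mem : ∀ {K H : Subgroup G}, K ≤ H → ∀ s ∈ S H, s ⊓ top K ∈ S K
  top_mono : ∀ {K H : Subgroup G}, K ≤ H → top K ≤ top H

variable {L : Type*} [Lattice L] [MulAction G L]

/-- The action of `G` on pairs `(K, s)`. -/
def dotL (g : G) (x : Subgroup G × L) : Subgroup G × L := (conjS g x.1, g • x.2)

theorem dotL_one (x : Subgroup G × L) : dotL (1 : G) x = x := by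
  simp [dotL, conjS_one]

theorem dotL_mul (g r : G) (x : Subgroup G × L) : dotL g (dotL r x) = dotL (g * r) x := by
  simp [dotL, conjS_mul, mul_smul]

variable (F : SubLatticeFamily G L)

/-- `(K,s) ∈ S(H, M_L)`: the pairs `(K,s)` with `K ≤ H` and `s ∈ L_K`. -/
def memS (H : Subgroup G) (x : Subgroup G × L) : Prop := x.1 ≤ H ∧ x.2 ∈ F.S x.1

/-- `N_H(K,s)`, the stabilizer in `H` of the pair `(K,s)`. -/
def NL (H : Subgroup G) (x : Subgroup G × L) : Subgroup G where
  carrier := {g | g ∈ H ∧ dotL g x = x}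
  one_mem' := ⟨H.one_mem, dotL_one x⟩
  mul_mem' := by
    rintro a b ⟨ha, da⟩ ⟨hb, db⟩
    exact ⟨H.mul_mem ha hb, by rw [← dotL_mul, db, da]⟩
  inv_mem' := by
    rintro a ⟨ha, da⟩
    refine ⟨H.inv_mem ha, ?_⟩
    conv_lhs => rw [← da]
    rw [dotL_mul, inv_mul_cancel, dotL_one]

/-- `|W_H(K,s)| = |N_H(K,s)/K|`. -/
def WCardL (H : Subgroup G) (x : Subgroup G × L) : ℕ := (x.1.subgroupOf (NL H x)).index

/-- A complete set of representatives `R(H, M_L)` of the `H`-orbits of `S(H, M_L)`. -/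
structure RepsL (F : SubLatticeFamily G L) (H : Subgroup G) where
  R : Set (Subgroup G × L)
  subset : ∀ x ∈ R, memS F H x
  complete : ∀ x, memS F H x → ∃! y, y ∈ R ∧ ∃ h ∈ H, dotL h x = y

variable {H : Subgroup G}

/-- The coordinate of a tuple indexed by a set of representatives at (the orbit of) an
arbitrary pair. -/
def coordAtL {A : Type*} [AddCommMonoid A] (ι : Set (Subgroup G × L)) (H : Subgroup G)
    (v : ↥ι → A) (y : Subgroup G × L) : A :=
  ∑ᶠ (k : ↥ι) (_ : ∃ h ∈ H, dotL h y = ↑k), v k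

/-- The class `[(H/K)_s]` expressed with respect to a family indexed by a set of
representatives: it picks out the member of the family lying in the orbit of `(K,s)`. -/
def clsSumL {A : Type*} [AddCommMonoid A] (ι : Set (Subgroup G × L)) (H : Subgroup G)
    (e : ↥ι → A) (y : Subgroup G × L) : A :=
  coordAtL ι H e y

/-- `#{hK ∈ H/K : U ≤ ʰK and t ≤ ʰs}` for `x = (K,s)`, `u = (U,t)`. -/
def invCountLe (H : Subgroup G) (x u : Subgroup G × L) : ℕ :=
  Nat.card {q : ↥H ⧸ x.1.subgroupOf H //
    ∃ h : ↥H, QuotientGroup.mk h = q ∧ u.1 ≤ conjS (h : G) x.1 ∧ u.2 ≤ (h : G) • x.2}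

/-- `#{hK ∈ H/K : U ≤ ʰK and t = res_U(ʰs) = ʰs ∧ sup L_U}` for `x = (K,s)`, `u = (U,t)`. -/
def invCountEq (F : SubLatticeFamily G L) (H : Subgroup G) (x u : Subgroup G × L) : ℕ :=
  Nat.card {q : ↥H ⧸ x.1.subgroupOf H //
    ∃ h : ↥H, QuotientGroup.mk h = q ∧ u.1 ≤ conjS (h : G) x.1 ∧
      u.2 = ((h : G) • x.2) ⊓ F.top u.1}

/-- The mark homomorphism `φ_H` (in coordinates w.r.t. the basis `[(H/K)_s]`). -/
def phiL (R : RepsL F H) (f : ↥R.R → ℤ) : ↥R.R → ℤ :=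
  fun u => ∑ᶠ k : ↥R.R, f k * (invCountEq F H k.1 u.1 : ℤ)

/-- The map `α̃_H` of Theorem 4.10 (in coordinates). -/
def alphaTL (R : RepsL F H) (f : ↥R.R → ℤ) : ↥R.R → ℤ :=
  fun u => ∑ᶠ k : ↥R.R, f k * (invCountLe H k.1 u.1 : ℤ)

/-- The subgroup `⟨r⟩U` generated by `r` and `U`. -/
def cyc (r : G) (U : Subgroup G) : Subgroup G := Subgroup.closure {r} ⊔ U

/-- The least element of `{s ∈ L_P : s ≥ t}` (junk value if there is none). -/
def leastGE [Nonempty L] (P : Subgroup G) (t : L) : L :=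
  Classical.epsilon fun s => (s ∈ F.S P ∧ t ≤ s) ∧ ∀ s', s' ∈ F.S P ∧ t ≤ s' → s ≤ s'

/-- The order of a Sylow `p`-subgroup of a group of order `n`; for `p = 0`
(representing `p = ∞`) it is `n` itself. -/
def sylCard (p n : ℕ) : ℕ := if p = 0 then n else p ^ (n.factorization p)

/-- The multiplicative set `ℤ ∖ (p)` (for `p` prime), resp. the units of `ℤ` (for `p = 0`,
representing `p = ∞`), so that `Localization (locMon p hp)` is `ℤ_(p)`, resp. `ℤ`. -/
def locMon (p : ℕ) (hp : p = 0 ∨ p.Prime) : Submonoid ℤ where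
  carrier := {k | if p = 0 then IsUnit k else ¬ (p : ℤ) ∣ k}
  one_mem' := by
    rcases hp with h | h
    · simp [h]
    · simp only [Set.mem_setOf_eq, if_neg h.ne_zero]
      intro hd
      exact h.one_lt.ne' (by exact_mod_cast Int.eq_one_of_dvd_one (by positivity) hd)
  mul_mem' := by
    intro a b ha hb
    rcases hp with h | h
    · simp only [Set.mem_setOf_eq, if_pos h] at *
      exact ha.mul hb
    · simp only [Set.mem_setOf_eq, if_neg h.ne_zero] at *
      intro hd
      rcases ((Nat.prime_iff_prime_int.mp h).dvd_mul.mp hd) with h1 | h1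
      · exact ha h1
      · exact hb h1

/-- `ℤ_(p)` (with `ℤ_(0)` interpreted as `ℤ_(∞) = ℤ`). -/
abbrev Zp (p : ℕ) (hp : p = 0 ∨ p.Prime) := Localization (locMon p hp)



/-- The map `α_H^{(p)}`. -/
def alphaL {A : Type*} [AddCommMonoid A] [Finite L] (R : RepsL F H) (x : ↥R.R → A) :
    ↥R.R → A :=
  fun u => ∑ᶠ (s : L) (_ : s ∈ F.S u.1.1 ∧ u.1.2 ≤ s), coordAtL R.R H x (u.1.1, s)

/-- The map `β_H^{(p)}`, defined via the Möbius functions of the posets `L_U`. -/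
def betaL {A : Type*} [AddCommGroup A] [Finite L] (R : RepsL F H) (x : ↥R.R → A) :
    ↥R.R → A :=
  fun u => ∑ᶠ (s : L) (hs : s ∈ F.S u.1.1 ∧ u.1.2 ≤ s),
    mob (⟨u.1.2, (R.subset u.1 u.2).2⟩ : ↥(F.S u.1.1)) ⟨s, hs.1⟩ •
      coordAtL R.R H x (u.1.1, s)

variable (p : ℕ) (hp : p = 0 ∨ p.Prime)

/-- `Obs(H, M_L)_(p)`. -/
abbrev ObsL (R : RepsL F H) :=
  ∀ u : ↥R.R, Zp p hp ⧸ Ideal.span {(sylCard p (WCardL H u.1) : Zp p hp)}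

/-- The Cauchy–Frobenius map `ψ̃_H^{(p)}`; `P u` is the choice of the subgroup of
`N_H(U,t)` containing `U` with `(P u)/U` the Sylow `p`-subgroup `W_H(U,t)_p`. -/
def psiTL (R : RepsL F H) (P : ↥R.R → Subgroup G) (x : ↥R.R → Zp p hp) : ObsL F p hp R :=
  fun u => Ideal.Quotient.mk _ (∑ᶠ q : ↥(P u) ⧸ (u.1.1.subgroupOf (P u)),
    ∑ᶠ (s : L) (_ : s ∈ F.S (cyc ((Quotient.out q : ↥(P u)) : G) u.1.1) ∧ u.1.2 ≤ s),
      coordAtL R.R H x (cyc ((Quotient.out q : ↥(P u)) : G) u.1.1, s))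

/-- The map `β̃_H^{(p)}`. -/
def betaTL [Nonempty L] (R : RepsL F H) (P : ↥R.R → Subgroup G) (x : ↥R.R → Zp p hp) :
    ObsL F p hp R :=
  fun u => Ideal.Quotient.mk _ (∑ᶠ q : ↥(P u) ⧸ (u.1.1.subgroupOf (P u)),
    coordAtL R.R H x (cyc ((Quotient.out q : ↥(P u)) : G) u.1.1,
      leastGE F (cyc ((Quotient.out q : ↥(P u)) : G) u.1.1) u.1.2))

/-- `φ_H^{(p)}` with `ℤ_(p)`-coefficients. -/
def phiLp (R : RepsL F H) (f : ↥R.R → Zp p hp) : ↥R.R → Zp p hp :=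
  fun u => ∑ᶠ k : ↥R.R, f k * (invCountEq F H k.1 u.1 : Zp p hp)

/-- The pair `(K ∩ ʰU, res(s ∧ ʰt))` appearing in the product formula. -/
def prodPairL (h : G) (x y : Subgroup G × L) : Subgroup G × L :=
  (x.1 ⊓ conjS h y.1, (x.2 ⊓ h • y.2) ⊓ F.top (x.1 ⊓ conjS h y.1))
theorem cyc_le_iff {r : G} {U M : Subgroup G} : cyc r U ≤ M ↔ r ∈ M ∧ U ≤ M := by
  rw [cyc, sup_le_iff, Subgroup.closure_le, Set.singleton_subset_iff, SetLike.mem_coe]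

/-- For `(K,s), (U,t) ∈ S(H, M_L)` and any subgroup `F' = Q/U` of
`W_H(U,t)` (encoded by a subgroup `Q` with `U ≤ Q ≤ N_H(U,t)`),
`Σ_{rU ∈ F'} #{hK ∈ inv_U((H/K)_s)_{≥ t} : ⟨r⟩U ≤ ʰK} ≡ 0 (mod |F'|)`. -/
theorem lattice_orbit_count_dvd [Finite G] [Finite L] (K U : Subgroup G) (s t : L)
    (hKs : memS F H (K, s)) (hUt : memS F H (U, t))
    (Q : Subgroup G) (hUQ : U ≤ Q) (hQN : Q ≤ NL H (U, t)) :
    (U.subgroupOf Q).index ∣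
      ∑ᶠ q : ↥Q ⧸ U.subgroupOf Q,
        Nat.card {w : ↥H ⧸ K.subgroupOf H //
          ∃ h : ↥H, QuotientGroup.mk h = w ∧ U ≤ conjS (h : G) K ∧ t ≤ (h : G) • s ∧
            cyc ((Quotient.out q : ↥Q) : G) U ≤ conjS (h : G) K} := by
  classical
  obtain ⟨hKH, hsK⟩ := hKs
  have hQH : Q ≤ H := fun g hg => (hQN hg).1
  have hconjU : ∀ r : ↥Q, conjS (r : G) U = U := fun r => congrArg Prod.fst ((hQN r.2).2)
  have hsmt : ∀ r : ↥Q, (r : G) • t = t := fun r => congrArg Prod.snd ((hQN r.2).2)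
  haveI hnorm : (U.subgroupOf Q).Normal := by
    constructor
    intro n hn q
    simp only [Subgroup.mem_subgroupOf, Subgroup.coe_mul, InvMemClass.coe_inv] at hn ⊢
    rw [← hconjU q, mem_conjS,
      show (q:G)⁻¹ * ((q:G) * (n:G) * (q:G)⁻¹) * (q:G) = (n:G) by group]
    exact hn
  -- the set acted on
  let X := {w : ↥H ⧸ K.subgroupOf H //
    ∃ h : ↥H, QuotientGroup.mk h = w ∧ U ≤ conjS (h : G) K ∧ t ≤ (h : G) • s}
  -- the action of Q on X
  have act_mem : ∀ (r : ↥Q) (x : X),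
      ∃ h : ↥H, QuotientGroup.mk h = (Subgroup.inclusion hQH r) • x.1 ∧
        U ≤ conjS (h : G) K ∧ t ≤ (h : G) • s := by
    intro r x
    obtain ⟨h, hh, hU, ht⟩ := x.2
    refine ⟨Subgroup.inclusion hQH r * h, ?_, ?_, ?_⟩
    · rw [← hh]; rfl
    · calc U = conjS (r : G) U := (hconjU r).symm
        _ ≤ conjS (r : G) (conjS (h : G) K) := conjS_mono _ hU
        _ = conjS ((r : G) * (h : G)) K := conjS_mul _ _ _
        _ = conjS ((Subgroup.inclusion hQH r * h : ↥H) : G) K := by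
            simp [Subgroup.coe_inclusion]
    · calc t = (r : G) • t := (hsmt r).symm
        _ ≤ (r : G) • ((h : G) • s) := F.smul_le _ _ _ ht
        _ = ((Subgroup.inclusion hQH r * h : ↥H) : G) • s := by
            rw [← mul_smul]; simp [Subgroup.coe_inclusion]
  let act : ↥Q → X → X := fun r x => ⟨(Subgroup.inclusion hQH r) • x.1, act_mem r x⟩
  have act_one : ∀ x : X, act 1 x = x := by
    intro x; apply Subtype.ext
    show (Subgroup.inclusion hQH 1) • x.1 = x.1
    rw [map_one, one_smul]
  have act_mul : ∀ (r r' : ↥Q) (x : X), act (r * r') x = act r (act r' x) := by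
    intro r r' x; apply Subtype.ext
    show (Subgroup.inclusion hQH (r * r')) • x.1 = _
    rw [map_mul, mul_smul]
  -- the fixed-point criterion
  have fix_iff : ∀ (r : ↥Q) (x : X) (h : ↥H), QuotientGroup.mk h = x.1 →
      (act r x = x ↔ (r : G) ∈ conjS (h : G) K) := by
    intro r x h hh
    rw [Subtype.ext_iff]
    show (Subgroup.inclusion hQH r) • x.1 = x.1 ↔ _
    rw [← hh, MulAction.Quotient.smul_mk, QuotientGroup.eq, Subgroup.mem_subgroupOf,
      show (((Subgroup.inclusion hQH r • h)⁻¹ * h : ↥H) : G)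
          = ((h : G)⁻¹ * (r : G) * (h : G))⁻¹ by
        simp [Subgroup.coe_inclusion]; group,
      K.inv_mem_iff, mem_conjS]
  have act_triv : ∀ (u : ↥Q), (u : G) ∈ U → ∀ x : X, act u x = x := by
    intro u hu x
    obtain ⟨h, hh, hU, _⟩ := x.2
    exact (fix_iff u x h hh).mpr (hU hu)
  -- the action of Q / U on X
  letI instQ : MulAction (↥Q ⧸ U.subgroupOf Q) X :=
  { smul := fun q x => Quotient.liftOn' q (fun r => act r x) (by
      intro a b hab
      rw [QuotientGroup.leftRel_apply] at hab
      show act a x = act b x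
      conv_rhs => rw [show b = a * (a⁻¹ * b) from by group]
      rw [act_mul, act_triv _ (Subgroup.mem_subgroupOf.mp hab) x])
    one_smul := fun x => act_one x
    mul_smul := fun a b x => by
      refine Quotient.inductionOn₂' a b (fun r r' => ?_)
      show Quotient.liftOn' (Quotient.mk'' (r * r')) (fun r => act r x) _ = _
      rw [Quotient.liftOn'_mk'']
      exact act_mul r r' x }
  have hsmul : ∀ (q : ↥Q ⧸ U.subgroupOf Q) (x : X), q • x = act (Quotient.out q) x := by
    intro q x
    conv_lhs => rw [← Quotient.out_eq' q]
    rfl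
  -- the bijection between the counted sets and fixed-point sets
  have e : ∀ q : ↥Q ⧸ U.subgroupOf Q,
      {w : ↥H ⧸ K.subgroupOf H //
        ∃ h : ↥H, QuotientGroup.mk h = w ∧ U ≤ conjS (h : G) K ∧ t ≤ (h : G) • s ∧
          cyc ((Quotient.out q : ↥Q) : G) U ≤ conjS (h : G) K} ≃
      {x : X // q • x = x} := by
    intro q
    refine ⟨fun a => ⟨⟨a.1, a.2.imp fun h hh => ⟨hh.1, hh.2.1, hh.2.2.1⟩⟩, ?_⟩,
      fun b => ⟨b.1.1, ?_⟩, fun a => rfl, fun b => rfl⟩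
    · obtain ⟨h, h1, h2, h3, h4⟩ := a.2
      rw [hsmul]
      exact (fix_iff _ _ h h1).mpr (cyc_le_iff.mp h4).1
    · obtain ⟨h, h1, h2, h3⟩ := b.1.2
      refine ⟨h, h1, h2, h3, cyc_le_iff.mpr ⟨?_, h2⟩⟩
      have := b.2
      rw [hsmul] at this
      exact (fix_iff _ _ h h1).mp this
  -- Burnside's lemma
  letI : Fintype X := Fintype.ofFinite X
  letI : Fintype (↥Q ⧸ U.subgroupOf Q) := Fintype.ofFinite _
  letI : ∀ a : ↥Q ⧸ U.subgroupOf Q, Fintype (MulAction.fixedBy X a) :=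
    fun a => Fintype.ofFinite _
  letI : Fintype (Quotient (MulAction.orbitRel (↥Q ⧸ U.subgroupOf Q) X)) :=
    Fintype.ofFinite _
  have hsum : ∑ᶠ q : ↥Q ⧸ U.subgroupOf Q,
      Nat.card {w : ↥H ⧸ K.subgroupOf H //
        ∃ h : ↥H, QuotientGroup.mk h = w ∧ U ≤ conjS (h : G) K ∧ t ≤ (h : G) • s ∧
          cyc ((Quotient.out q : ↥Q) : G) U ≤ conjS (h : G) K}
      = ∑ q : ↥Q ⧸ U.subgroupOf Q, Fintype.card (MulAction.fixedBy X q) := by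
    rw [finsum_eq_sum_of_fintype]
    refine Finset.sum_congr rfl fun q _ => ?_
    rw [Nat.card_congr (e q)]
    rw [Nat.card_eq_fintype_card]
    exact Fintype.card_congr (Equiv.refl _)
  rw [hsum, MulAction.sum_card_fixedBy_eq_card_orbits_mul_card_group]
  have hidx : (U.subgroupOf Q).index = Fintype.card (↥Q ⧸ U.subgroupOf Q) :=
    Nat.card_eq_fintype_card
  rw [hidx]
  exact dvd_mul_left _ _

end
end LB
end

section
/- Let G be a finite group and L a finite G-lattice with a family of nonempty sublattices L_H as in the lattice Burnside ring setting. Let X ⊆ S(G,M_L) be closed under the G-action and suppose Condition (A) holds: for every (U,t) ∈ X and gU ∈ W_G(U,t), the set {(K,s) ∈ X : K ≥ ⟨g⟩U and s ≥ s_{(g,t)}}, where s_{(g,t)} = inf{s ∈ L_{⟨g⟩U} : s ≥ t}, has a unique minimal element (⟨g⟩U̅, s̅_{(g,t)}) with respect to the componentwise order. Let X̅ = R(G,M_L) ∩ X, let Ω(G,X)_(p) be the free Z_(p)-module on [(G/K)_s] for (K,s) ∈ X̅, let Ω̃(G,X)_(p) = ∏_{(K,s)∈X̅} Z_(p), let Obs(G,X)_(p)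 = ∏_{(K,s)∈X̅} Z_(p)/|W_G(K,s)_p|Z_(p), let φ_X^{(p)} : Ω(G,X)_(p) → Ω̃(G,X)_(p) send [(G/H)_s] to (#{gH ∈ G/H : U ≤ ᵍH and t ≤ ᵍs})_{(U,t)∈X̅}, and let ψ_X^{(p)} : Ω̃(G,X)_(p) → Obs(G,X)_(p) send (x_{(H,s)})_{(H,s)∈X̅} to (Σ_{gU ∈ W_G(U,t)_p} x_{(⟨g⟩U̅, s̅_{(g,t)})} mod |W_G(U,t)_p|)_{(U,t)∈X̅}. Then the sequence 0 → Ω(G,X)_(p) →^{φ_X^{(p)}} Ω̃(G,X)_(p) →^{ψ_X^{(p)}} Obs(G,X)_(p) → 0 of Z_(p)-modules is exact, and Ω(G,X)_(p) admits a Z_(p)-algebra structure for which φ_X^{(p)} is an injective Z_(p)-algebra homomorphism into the product ring ∏_{(K,s)∈X̅} Z_(p). -/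
set_option linter.unusedSectionVars false
set_option linter.unusedVariables false
set_option maxHeartbeats 1600000

open scoped Classical

namespace LB
noncomputable section

variable {G : Type*} [Group G]

variable {L : Type*} [Lattice L] [MulAction G L]

variable (F : SubLatticeFamily G L)

variable {H : Subgroup G}

variable (p : ℕ) (hp : p = 0 ∨ p.Prime)

/-- The unique minimal element `(⟨g⟩U̅, s̅_{(g,t)})` of
`{(K,s) ∈ X : (K,s) ≥ (⟨g⟩U, s_{(g,t)})}` provided by Condition (A)
(junk value if it does not exist). -/
def minChoice [Nonempty L] (X : Set (Subgroup G × L)) (x : Subgroup G × L) (g : G) :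
    Subgroup G × L :=
  Classical.epsilon fun y =>
    (y ∈ X ∧ cyc g x.1 ≤ y.1 ∧ leastGE F (cyc g x.1) x.2 ≤ y.2) ∧
    ∀ z : Subgroup G × L,
      z ∈ X ∧ cyc g x.1 ≤ z.1 ∧ leastGE F (cyc g x.1) x.2 ≤ z.2 →
      z.1 ≤ y.1 ∧ z.2 ≤ y.2 → z = y

/-- The Burnside map `φ_X^{(p)} : Ω(G,X)_(p) → Ω̃(G,X)_(p)`. -/
def phiX (R : RepsL F (⊤ : Subgroup G)) (X : Set (Subgroup G × L))
    (f : ↥(R.R ∩ X) → Zp p hp) : ↥(R.R ∩ X) → Zp p hp :=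
  fun u => ∑ᶠ k : ↥(R.R ∩ X), f k * (invCountLe (⊤ : Subgroup G) k.1 u.1 : Zp p hp)

/-- The Cauchy–Frobenius map `ψ_X^{(p)} : Ω̃(G,X)_(p) → Obs(G,X)_(p)`. -/
def psiX [Nonempty L] (R : RepsL F (⊤ : Subgroup G)) (X : Set (Subgroup G × L))
    (P : ↥(R.R ∩ X) → Subgroup G) (x : ↥(R.R ∩ X) → Zp p hp) :
    ∀ u : ↥(R.R ∩ X),
      Zp p hp ⧸ Ideal.span {(sylCard p (WCardL (⊤ : Subgroup G) u.1) : Zp p hp)} :=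
  fun u => Ideal.Quotient.mk _
    (∑ᶠ q : ↥(P u) ⧸ (u.1.1.subgroupOf (P u)),
      coordAtL (R.R ∩ X) ⊤ x (minChoice F X u.1 ((Quotient.out q : ↥(P u)) : G)))


/-! ### Auxiliary lemmas -/

section AuxBasic

theorem card_conjS (g : G) (K : Subgroup G) :
    Nat.card (conjS g K) = Nat.card K :=
  (Nat.card_congr (K.equivMapOfInjective ((MulAut.conj g).toMonoidHom)
    (MulAut.conj g).injective).toEquiv).symm

theorem subgroup_eq_of_le_of_card_le [Finite G] {A B : Subgroup G} (h : A ≤ B)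
    (hc : Nat.card B ≤ Nat.card A) : A = B := by
  apply SetLike.ext'
  apply Set.eq_of_subset_of_ncard_le (SetLike.coe_subset_coe.mpr h) ?_ (Set.toFinite _)
  have h1 : Nat.card ((A : Set G) : Type _) = Nat.card A := rfl
  have h2 : Nat.card ((B : Set G) : Type _) = Nat.card B := rfl
  rw [← Nat.card_coe_set_eq, ← Nat.card_coe_set_eq]
  rw [h1, h2]; exact hc

theorem conjS_eq_of_le [Finite G] {g : G} {K : Subgroup G} (h : K ≤ conjS g K) :
    conjS g K = K :=
  (subgroup_eq_of_le_of_card_le h (card_conjS g K).le).symm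

variable {L : Type*} [Lattice L] [MulAction G L]

theorem smul_le_iff (F : SubLatticeFamily G L) (g : G) {x y : L} :
    g • x ≤ g • y ↔ x ≤ y := by
  constructor
  · intro h
    have := F.smul_le g⁻¹ _ _ h
    simpa [inv_smul_smul] using this
  · exact F.smul_le g _ _

theorem smul_eq_of_le_smul [Finite G] (F : SubLatticeFamily G L) {g : G} {x : L}
    (h : x ≤ g • x) : g • x = x := by
  have key : ∀ n : ℕ, x ≤ g ^ n • x := by
    intro n; induction n with
    | zero => simp
    | succ n ih =>
      calc x ≤ g ^ n • x := ih
      _ ≤ g ^ n • (g • x) := F.smul_le _ _ _ h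
      _ = g ^ (n + 1) • x := by rw [smul_smul, ← pow_succ]
  have hpos : 0 < orderOf g := orderOf_pos g
  have h1 : g • x ≤ g • (g ^ (orderOf g - 1) • x) := F.smul_le _ _ _ (key _)
  have h2 : g • (g ^ (orderOf g - 1) • x) = x := by
    rw [smul_smul, ← pow_succ', Nat.sub_add_cancel hpos, pow_orderOf_eq_one, one_smul]
  refine le_antisymm ?_ h
  calc g • x ≤ g • (g ^ (orderOf g - 1) • x) := h1
  _ = x := h2

/-- The subconjugacy relation on pairs. -/
def relP (x y : Subgroup G × L) : Prop :=
  ∃ g : G, x.1 ≤ conjS g y.1 ∧ x.2 ≤ g • y.2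

theorem relP_refl (x : Subgroup G × L) : relP x x :=
  ⟨1, by rw [conjS_one], by rw [one_smul]⟩

theorem relP_trans (F : SubLatticeFamily G L) {x y z : Subgroup G × L}
    (h1 : relP x y) (h2 : relP y z) : relP x z := by
  obtain ⟨g, hg1, hg2⟩ := h1; obtain ⟨h, hh1, hh2⟩ := h2
  refine ⟨g * h, ?_, ?_⟩
  · rw [← conjS_mul]; exact hg1.trans (conjS_mono g hh1)
  · rw [← smul_smul]; exact hg2.trans (F.smul_le g _ _ hh2)

theorem relP_dot_self (h : G) (y : Subgroup G × L) : relP (dotL h y) y :=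
  ⟨h, le_rfl, le_rfl⟩

theorem relP_self_dot (h : G) (y : Subgroup G × L) : relP y (dotL h y) := by
  refine ⟨h⁻¹, ?_, ?_⟩
  · show y.1 ≤ conjS h⁻¹ (conjS h y.1); rw [conjS_mul, inv_mul_cancel, conjS_one]
  · show y.2 ≤ h⁻¹ • (h • y.2); rw [inv_smul_smul]

theorem relP_antisymm [Finite G] (F : SubLatticeFamily G L) {x y : Subgroup G × L}
    (h1 : relP x y) (h2 : relP y x) : ∃ g : G, dotL g y = x := by
  obtain ⟨g, hg1, hg2⟩ := h1; obtain ⟨h, hh1, hh2⟩ := h2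
  have hc1 : x.1 ≤ conjS (g * h) x.1 := by
    rw [← conjS_mul]; exact hg1.trans (conjS_mono g hh1)
  have hceq : conjS (g * h) x.1 = x.1 := conjS_eq_of_le hc1
  have e1 : conjS g y.1 = x.1 := by
    refine le_antisymm ?_ hg1
    calc conjS g y.1 ≤ conjS g (conjS h x.1) := conjS_mono g hh1
    _ = conjS (g * h) x.1 := conjS_mul g h x.1
    _ = x.1 := hceq
  have hl1 : x.2 ≤ (g * h) • x.2 := by
    rw [← smul_smul]; exact hg2.trans (F.smul_le g _ _ hh2)
  have hleq : (g * h) • x.2 = x.2 := smul_eq_of_le_smul F hl1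
  have e2 : g • y.2 = x.2 := by
    refine le_antisymm ?_ hg2
    calc g • y.2 ≤ g • (h • x.2) := F.smul_le g _ _ hh2
    _ = (g * h) • x.2 := (mul_smul g h x.2).symm
    _ = x.2 := hleq
  refine ⟨g, ?_⟩
  show (conjS g y.1, g • y.2) = x
  rw [e1, e2]

theorem exists_least (F : SubLatticeFamily G L) [Finite L] {P' : Subgroup G} {t : L}
    (hne : ∃ s, s ∈ F.S P' ∧ t ≤ s) :
    ∃ m, (m ∈ F.S P' ∧ t ≤ m) ∧ ∀ s', s' ∈ F.S P' ∧ t ≤ s' → m ≤ s' := by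
  obtain ⟨m, hm, hmin⟩ : ∃ a ∈ {s | s ∈ F.S P' ∧ t ≤ s}, ∀ a' ∈ {s | s ∈ F.S P' ∧ t ≤ s},
      id a' ≤ id a → id a = id a' := by
    obtain ⟨a, ha, hmin⟩ := Set.Finite.exists_minimalFor id {s | s ∈ F.S P' ∧ t ≤ s}
      (Set.toFinite _) hne
    exact ⟨a, ha, fun a' ha' hle => le_antisymm (hmin ha' hle) hle⟩
  refine ⟨m, hm, fun s' hs' => ?_⟩
  have h1 : m ⊓ s' ∈ {s | s ∈ F.S P' ∧ t ≤ s} :=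
    ⟨F.inf_mem _ hm.1 hs'.1, le_inf hm.2 hs'.2⟩
  have h2 := hmin _ h1 inf_le_left
  calc m = m ⊓ s' := h2
  _ ≤ s' := inf_le_right

theorem leastGE_spec (F : SubLatticeFamily G L) [Finite L] [Nonempty L]
    {P' : Subgroup G} {t : L} (hne : ∃ s, s ∈ F.S P' ∧ t ≤ s) :
    (leastGE F P' t ∈ F.S P' ∧ t ≤ leastGE F P' t) ∧
      ∀ s', s' ∈ F.S P' ∧ t ≤ s' → leastGE F P' t ≤ s' := by
  have h := exists_least F hne
  obtain ⟨m, hm1, hm2⟩ := h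
  exact Classical.epsilon_spec (p := fun s =>
    (s ∈ F.S P' ∧ t ≤ s) ∧ ∀ s', s' ∈ F.S P' ∧ t ≤ s' → s ≤ s') ⟨m, hm1, hm2⟩

theorem leastGE_eq_self (F : SubLatticeFamily G L) [Finite L] [Nonempty L]
    {P' : Subgroup G} {t : L} (ht : t ∈ F.S P') : leastGE F P' t = t := by
  have hs := leastGE_spec F ⟨t, ht, le_rfl⟩
  exact le_antisymm (hs.2 t ⟨ht, le_rfl⟩) hs.1.2

theorem cyc_le {g : G} {U K : Subgroup G} (hg : g ∈ K) (hU : U ≤ K) : cyc g U ≤ K :=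
  sup_le ((Subgroup.closure_le K).mpr (by simpa using hg)) hU

theorem le_cyc (g : G) (U : Subgroup G) : U ≤ cyc g U := le_sup_right

theorem mem_cyc (g : G) (U : Subgroup G) : g ∈ cyc g U :=
  (le_sup_left : Subgroup.closure {g} ≤ cyc g U) (Subgroup.subset_closure rfl)

theorem cyc_eq_of_mem {g : G} {U : Subgroup G} (hg : g ∈ U) : cyc g U = U :=
  le_antisymm (cyc_le hg le_rfl) (le_cyc g U)

theorem mem_NL_iff {H : Subgroup G} {x : Subgroup G × L} {g : G} :
    g ∈ NL H x ↔ g ∈ H ∧ dotL g x = x := Iff.rfl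

end AuxBasic


section AuxRep

variable [Finite G] [Finite L] [Nonempty L]
variable (R : RepsL F (⊤ : Subgroup G)) (X : Set (Subgroup G × L))
variable (hXact : ∀ g : G, ∀ x ∈ X, dotL g x ∈ X)
variable (hXS : ∀ x ∈ X, memS F ⊤ x)
variable (hA : ∀ x ∈ X, ∀ g ∈ NL (⊤ : Subgroup G) x,
      ∃! y : Subgroup G × L,
        (y ∈ X ∧ cyc g x.1 ≤ y.1 ∧ leastGE F (cyc g x.1) x.2 ≤ y.2) ∧
        ∀ z : Subgroup G × L,
          z ∈ X ∧ cyc g x.1 ≤ z.1 ∧ leastGE F (cyc g x.1) x.2 ≤ z.2 →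
          z.1 ≤ y.1 ∧ z.2 ≤ y.2 → z = y)

include R hXact hXS hA

theorem exists_unique_repX {y : Subgroup G × L} (hy : y ∈ X) :
    ∃! k : ↥(R.R ∩ X), ∃ g : G, dotL g y = ↑k := by
  obtain ⟨y', hy', huniq⟩ := R.complete y (hXS y hy)
  obtain ⟨hy'R, g, -, hg⟩ := hy'
  have hy'X : y' ∈ X := hg ▸ hXact g y hy
  refine ⟨⟨y', hy'R, hy'X⟩, ⟨g, hg⟩, ?_⟩
  rintro k ⟨h, hh⟩
  exact Subtype.ext (huniq k ⟨k.2.1, h, Subgroup.mem_top h, hh⟩)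

noncomputable def repX {y : Subgroup G × L} (hy : y ∈ X) : ↥(R.R ∩ X) :=
  (exists_unique_repX F R X hXact hXS hA hy).exists.choose

theorem repX_spec {y : Subgroup G × L} (hy : y ∈ X) :
    ∃ g : G, dotL g y = ↑(repX F R X hXact hXS hA hy) :=
  (exists_unique_repX F R X hXact hXS hA hy).exists.choose_spec

theorem repX_eq {y : Subgroup G × L} (hy : y ∈ X) {k : ↥(R.R ∩ X)}
    (hk : ∃ g : G, dotL g y = ↑k) : k = repX F R X hXact hXS hA hy :=
  (exists_unique_repX F R X hXact hXS hA hy).unique hk (repX_spec F R X hXact hXS hA hy)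

theorem repX_coe (k : ↥(R.R ∩ X)) : repX F R X hXact hXS hA k.2.2 = k :=
  (repX_eq F R X hXact hXS hA k.2.2 ⟨1, dotL_one _⟩).symm

theorem repX_dot (h : G) {y : Subgroup G × L} (hy : y ∈ X) :
    repX F R X hXact hXS hA (hXact h y hy) = repX F R X hXact hXS hA hy := by
  symm
  apply repX_eq
  obtain ⟨g, hg⟩ := repX_spec F R X hXact hXS hA hy
  exact ⟨g * h⁻¹, by rw [dotL_mul, inv_mul_cancel_right, hg]⟩

theorem coordAtL_eq {A : Type*} [AddCommMonoid A] (v : ↥(R.R ∩ X) → A)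
    {y : Subgroup G × L} (hy : y ∈ X) :
    coordAtL (R.R ∩ X) ⊤ v y = v (repX F R X hXact hXS hA hy) := by
  rw [coordAtL]
  refine (finsum_eq_single _ (repX F R X hXact hXS hA hy) ?_).trans ?_
  · intro k hk
    rw [finsum_eq_if, if_neg]
    rintro ⟨h, -, hh⟩
    exact hk (repX_eq F R X hXact hXS hA hy ⟨h, hh⟩)
  · rw [finsum_eq_if, if_pos]
    obtain ⟨g, hg⟩ := repX_spec F R X hXact hXS hA hy
    exact ⟨g, Subgroup.mem_top g, hg⟩

theorem rep_rel_antisymm {k j : ↥(R.R ∩ X)} (h1 : relP (k : Subgroup G × L) ↑j)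
    (h2 : relP (j : Subgroup G × L) ↑k) : k = j := by
  obtain ⟨g, hg⟩ := relP_antisymm F h1 h2
  have e1 : k = repX F R X hXact hXS hA j.2.2 := repX_eq F R X hXact hXS hA j.2.2 ⟨g, hg⟩
  rw [e1, repX_coe]

theorem minChoice_spec {x : Subgroup G × L} (hx : x ∈ X) {g : G}
    (hg : g ∈ NL (⊤ : Subgroup G) x) :
    ((minChoice F X x g ∈ X ∧ cyc g x.1 ≤ (minChoice F X x g).1 ∧
        leastGE F (cyc g x.1) x.2 ≤ (minChoice F X x g).2) ∧
      ∀ z : Subgroup G × L,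
        z ∈ X ∧ cyc g x.1 ≤ z.1 ∧ leastGE F (cyc g x.1) x.2 ≤ z.2 →
        z.1 ≤ (minChoice F X x g).1 ∧ z.2 ≤ (minChoice F X x g).2 →
        z = minChoice F X x g) :=
  Classical.epsilon_spec (hA x hx g hg).exists

theorem minChoice_eq {x : Subgroup G × L} (hx : x ∈ X) {g : G}
    (hg : g ∈ NL (⊤ : Subgroup G) x) {y : Subgroup G × L}
    (hy : (y ∈ X ∧ cyc g x.1 ≤ y.1 ∧ leastGE F (cyc g x.1) x.2 ≤ y.2) ∧
      ∀ z : Subgroup G × L, z ∈ X ∧ cyc g x.1 ≤ z.1 ∧ leastGE F (cyc g x.1) x.2 ≤ z.2 →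
        z.1 ≤ y.1 ∧ z.2 ≤ y.2 → z = y) :
    y = minChoice F X x g :=
  (hA x hx g hg).unique hy (minChoice_spec F R X hXact hXS hA hx hg)

theorem minChoice_min {x : Subgroup G × L} (hx : x ∈ X) {g : G}
    (hg : g ∈ NL (⊤ : Subgroup G) x) {z : Subgroup G × L}
    (hz : z ∈ X ∧ cyc g x.1 ≤ z.1 ∧ leastGE F (cyc g x.1) x.2 ≤ z.2) :
    (minChoice F X x g).1 ≤ z.1 ∧ (minChoice F X x g).2 ≤ z.2 := by
  classical
  set Zs : Set (Subgroup G × L) :=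
    {w | (w ∈ X ∧ cyc g x.1 ≤ w.1 ∧ leastGE F (cyc g x.1) x.2 ≤ w.2) ∧ w ≤ z} with hZs
  obtain ⟨a, ha, hamin⟩ : ∃ a ∈ Zs, ∀ a' ∈ Zs, id a' ≤ id a → id a = id a' := by
    obtain ⟨a, ha, hmin⟩ := Set.Finite.exists_minimalFor id Zs (Set.toFinite _)
      ⟨z, hz, le_rfl⟩
    exact ⟨a, ha, fun a' ha' hle => le_antisymm (hmin ha' hle) hle⟩
  have ha' : a = minChoice F X x g := by
    apply minChoice_eq F R X hXact hXS hA hx hg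
    refine ⟨ha.1, ?_⟩
    rintro w hw ⟨hw1, hw2⟩
    have hwle : w ≤ a := Prod.le_def.mpr ⟨hw1, hw2⟩
    have hwZ : w ∈ Zs := ⟨hw, le_trans hwle ha.2⟩
    exact (hamin w hwZ hwle).symm
  rw [← ha']
  exact Prod.le_def.mp ha.2

theorem exists_ge_in_cyc {x : Subgroup G × L} (hx2 : x.2 ∈ F.S x.1) (g : G) :
    ∃ s, s ∈ F.S (cyc g x.1) ∧ x.2 ≤ s :=
  ⟨F.top (cyc g x.1), F.top_mem _, (F.le_top _ _ hx2).trans (F.top_mono (le_cyc g x.1))⟩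

theorem le_leastGE_cyc {x : Subgroup G × L} (hx2 : x.2 ∈ F.S x.1) (g : G) :
    x.2 ≤ leastGE F (cyc g x.1) x.2 :=
  (leastGE_spec F (exists_ge_in_cyc F R X hXact hXS hA hx2 g)).1.2

theorem minChoice_mem_X {x : Subgroup G × L} (hx : x ∈ X) {g : G}
    (hg : g ∈ NL (⊤ : Subgroup G) x) : minChoice F X x g ∈ X :=
  (minChoice_spec F R X hXact hXS hA hx hg).1.1

theorem relP_minChoice {x : Subgroup G × L} (hx : x ∈ X) (hx2 : x.2 ∈ F.S x.1) {g : G}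
    (hg : g ∈ NL (⊤ : Subgroup G) x) : relP x (minChoice F X x g) := by
  refine ⟨1, ?_, ?_⟩
  · rw [conjS_one]
    exact (le_cyc g x.1).trans (minChoice_spec F R X hXact hXS hA hx hg).1.2.1
  · rw [one_smul]
    exact (le_leastGE_cyc F R X hXact hXS hA hx2 g).trans (minChoice_spec F R X hXact hXS hA hx hg).1.2.2

theorem minChoice_of_mem {x : Subgroup G × L} (hx : x ∈ X) (hx2 : x.2 ∈ F.S x.1) {g : G}
    (hgU : g ∈ x.1) (hg : g ∈ NL (⊤ : Subgroup G) x) : minChoice F X x g = x := by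
  symm
  apply minChoice_eq F R X hXact hXS hA hx hg
  constructor
  · exact ⟨hx, by rw [cyc_eq_of_mem hgU], by rw [cyc_eq_of_mem hgU, leastGE_eq_self F hx2]⟩
  · rintro z ⟨hz1, hz2, hz3⟩ ⟨hz4, hz5⟩
    rw [cyc_eq_of_mem hgU] at hz2
    rw [cyc_eq_of_mem hgU, leastGE_eq_self F hx2] at hz3
    exact Prod.ext (le_antisymm hz4 hz2) (le_antisymm hz5 hz3)

theorem mem_of_orbit_minChoice {x : Subgroup G × L} (hx : x ∈ X) {g : G}
    (hg : g ∈ NL (⊤ : Subgroup G) x) {h : G}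
    (he : dotL h (minChoice F X x g) = x) : g ∈ x.1 := by
  have h1 : cyc g x.1 ≤ (minChoice F X x g).1 := (minChoice_spec F R X hXact hXS hA hx hg).1.2.1
  have h2 : conjS h (minChoice F X x g).1 = x.1 := congrArg Prod.fst he
  have hcard : Nat.card (minChoice F X x g).1 = Nat.card x.1 := by rw [← h2, card_conjS]
  have hle : x.1 ≤ (minChoice F X x g).1 := (le_cyc g x.1).trans h1
  have heq : x.1 = (minChoice F X x g).1 := subgroup_eq_of_le_of_card_le hle hcard.le
  rw [heq]
  exact h1 (mem_cyc g x.1)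

end AuxRep


section AuxCount

variable [Finite G] [Finite L]

include F in
theorem invCountLe_dotL (k : Subgroup G × L) (h : G) (y : Subgroup G × L) :
    invCountLe (⊤ : Subgroup G) k (dotL h y) = invCountLe ⊤ k y := by
  unfold invCountLe
  apply Nat.card_congr
  have hmem : h ∈ (⊤ : Subgroup G) := Subgroup.mem_top h
  set h' : (⊤ : Subgroup G) := ⟨h, hmem⟩ with hh'
  refine Equiv.subtypeEquiv (MulAction.toPerm h'⁻¹) ?_
  intro q
  constructor
  · rintro ⟨a, ha, c1, c2⟩
    refine ⟨h'⁻¹ * a, ?_, ?_, ?_⟩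
    · rw [← ha]; rfl
    · have hc : (↑(h'⁻¹ * a) : G) = h⁻¹ * ↑a := rfl
      rw [hc]
      have e1 : y.1 = conjS h⁻¹ (conjS h y.1) := by
        rw [conjS_mul, inv_mul_cancel, conjS_one]
      rw [e1, ← conjS_mul]
      exact conjS_mono h⁻¹ c1
    · have hc : (↑(h'⁻¹ * a) : G) = h⁻¹ * ↑a := rfl
      rw [hc]
      have e1 : y.2 = h⁻¹ • ((dotL h y).2) := by
        show y.2 = h⁻¹ • (h • y.2); rw [inv_smul_smul]
      rw [e1, mul_smul]
      exact F.smul_le h⁻¹ _ _ c2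
  · rintro ⟨a, ha, c1, c2⟩
    refine ⟨h' * a, ?_, ?_, ?_⟩
    · have : QuotientGroup.mk (h' * a) = h' • (QuotientGroup.mk a :
        (⊤ : Subgroup G) ⧸ k.1.subgroupOf ⊤) := rfl
      rw [this, ha]
      show h' • (h'⁻¹ • q) = q
      rw [smul_inv_smul]
    · have hc : (↑(h' * a) : G) = h * ↑a := rfl
      rw [hc]
      show conjS h y.1 ≤ conjS (h * ↑a) k.1
      rw [← conjS_mul]
      exact conjS_mono h c1
    · have hc : (↑(h' * a) : G) = h * ↑a := rfl
      rw [hc]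
      show h • y.2 ≤ (h * ↑a) • k.2
      rw [mul_smul]
      exact F.smul_le h _ _ c2

theorem invCountLe_ne_zero_relP {k y : Subgroup G × L}
    (h : invCountLe (⊤ : Subgroup G) k y ≠ 0) : relP y k := by
  unfold invCountLe at h
  obtain ⟨⟨⟨q, a, ha, c1, c2⟩⟩, -⟩ := Nat.card_ne_zero.mp h
  exact ⟨↑a, c1, c2⟩

theorem invCountLe_self_ne_zero (x : Subgroup G × L) :
    invCountLe (⊤ : Subgroup G) x x ≠ 0 := by
  unfold invCountLe
  apply Nat.card_ne_zero.mpr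
  refine ⟨⟨⟨QuotientGroup.mk 1, 1, rfl, ?_, ?_⟩⟩, inferInstance⟩
  · show x.1 ≤ conjS ((1 : (⊤ : Subgroup G)) : G) x.1
    rw [OneMemClass.coe_one, conjS_one]
  · show x.2 ≤ ((1 : (⊤ : Subgroup G)) : G) • x.2
    rw [OneMemClass.coe_one, one_smul]

theorem invCountLe_self_eq {x : Subgroup G × L} (hx : x.2 ∈ F.S x.1) :
    invCountLe (⊤ : Subgroup G) x x = WCardL ⊤ x := by
  have step1 : invCountLe (⊤ : Subgroup G) x x =
      Nat.card {q : (⊤ : Subgroup G) ⧸ x.1.subgroupOf ⊤ //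
        ∃ a : (⊤ : Subgroup G), QuotientGroup.mk a = q ∧ (↑a : G) ∈ NL (⊤ : Subgroup G) x} := by
    unfold invCountLe
    apply Nat.card_congr
    apply Equiv.subtypeEquivRight
    intro q
    constructor
    · rintro ⟨a, ha, c1, c2⟩
      refine ⟨a, ha, Subgroup.mem_top _, ?_⟩
      show (conjS (↑a : G) x.1, (↑a : G) • x.2) = x
      rw [conjS_eq_of_le c1, smul_eq_of_le_smul F c2]
    · rintro ⟨a, ha, haN⟩
      have h1 : conjS (↑a : G) x.1 = x.1 := congrArg Prod.fst haN.2
      have h2 : (↑a : G) • x.2 = x.2 := congrArg Prod.snd haN.2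
      exact ⟨a, ha, h1.ge, h2.ge⟩
  rw [step1, WCardL, Subgroup.index_eq_card]
  apply Nat.card_congr
  symm
  set N := NL (⊤ : Subgroup G) x with hN
  refine Equiv.ofBijective (fun q' => Quotient.liftOn' q'
    (fun n => (⟨QuotientGroup.mk ⟨↑n, Subgroup.mem_top _⟩,
      ⟨⟨↑n, Subgroup.mem_top _⟩, rfl, n.2⟩⟩ :
      {q : (⊤ : Subgroup G) ⧸ x.1.subgroupOf ⊤ //
        ∃ a : (⊤ : Subgroup G), QuotientGroup.mk a = q ∧ (↑a : G) ∈ N}))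
    (fun n1 n2 hrel => Subtype.ext (by
      have hmem := QuotientGroup.leftRel_apply.mp hrel
      apply QuotientGroup.eq.mpr
      rw [Subgroup.mem_subgroupOf] at hmem ⊢
      exact hmem))) ⟨?_, ?_⟩
  · intro q1' q2'
    refine Quotient.inductionOn₂' q1' q2' ?_
    intro n1 n2 hfeq
    have h1 := Subtype.ext_iff.mp hfeq
    simp only [Quotient.liftOn'_mk''] at h1
    have h2 := QuotientGroup.eq.mp h1
    rw [Subgroup.mem_subgroupOf] at h2
    apply Quotient.sound'
    apply QuotientGroup.leftRel_apply.mpr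
    rw [Subgroup.mem_subgroupOf]
    exact h2
  · rintro ⟨q, a, ha, haN⟩
    refine ⟨QuotientGroup.mk (⟨↑a, haN⟩ : ↥N), ?_⟩
    apply Subtype.ext
    show QuotientGroup.mk ⟨↑a, Subgroup.mem_top _⟩ = q
    have : (⟨↑a, Subgroup.mem_top _⟩ : (⊤ : Subgroup G)) = a := Subtype.ext rfl
    rw [this, ha]

end AuxCount


section AuxBurnside

theorem index_dvd_sum_fix {Γ : Type*} [Group Γ] [Finite Γ] (V : Subgroup Γ)
    {Y : Type*} [Finite Y] (a : Γ →* Equiv.Perm Y) (hV : ∀ v ∈ V, a v = 1) :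
    V.index ∣ ∑ᶠ q : Γ ⧸ V, Nat.card {y : Y // a (Quotient.out q) y = y} := by
  classical
  letI : Fintype Γ := Fintype.ofFinite Γ
  letI : Fintype Y := Fintype.ofFinite Y
  letI : MulAction Γ Y := MulAction.compHom Y a
  letI : ∀ g : Γ, Fintype (MulAction.fixedBy Y g) := fun g => Fintype.ofFinite _
  letI : Fintype (Quotient (MulAction.orbitRel Γ Y)) := Fintype.ofFinite _
  letI : Fintype (Γ ⧸ V) := Fintype.ofFinite _
  have hfixcoe : ∀ g : Γ,
      Nat.card {y : Y // a g y = y} = Fintype.card (MulAction.fixedBy Y g) := by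
    intro g
    rw [Nat.card_eq_fintype_card]
    apply Fintype.card_congr
    exact Equiv.subtypeEquivRight (fun y => Iff.rfl)
  have hcoset : ∀ (q : Γ ⧸ V) (g : Γ), QuotientGroup.mk g = q → a g = a (Quotient.out q) := by
    intro q g hg
    have h1 : QuotientGroup.mk (Quotient.out q) = q := Quotient.out_eq q
    have h2 : (Quotient.out q)⁻¹ * g ∈ V := QuotientGroup.eq.mp (h1.trans hg.symm)
    have h3 : g = Quotient.out q * ((Quotient.out q)⁻¹ * g) := by group
    rw [h3, map_mul, hV _ h2, mul_one]
  have hb := MulAction.sum_card_fixedBy_eq_card_orbits_mul_card_group Γ Y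
  have hsplit : ∑ g : Γ, Fintype.card (MulAction.fixedBy Y g)
      = ∑ q : Γ ⧸ V, ∑ g : {g : Γ // QuotientGroup.mk g = q},
          Fintype.card (MulAction.fixedBy Y (↑g : Γ)) :=
    (Fintype.sum_fiberwise _ _).symm
  have hfib : ∀ q : Γ ⧸ V,
      ∑ g : {g : Γ // QuotientGroup.mk g = q}, Fintype.card (MulAction.fixedBy Y (↑g : Γ))
      = Nat.card V * Nat.card {y : Y // a (Quotient.out q) y = y} := by
    intro q
    have hconst : ∀ g : {g : Γ // QuotientGroup.mk g = q},
        Fintype.card (MulAction.fixedBy Y (↑g : Γ))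
          = Nat.card {y : Y // a (Quotient.out q) y = y} := by
      intro g
      rw [← hfixcoe (↑g : Γ)]
      rw [hcoset q ↑g g.2]
    rw [Finset.sum_congr rfl (fun g _ => hconst g), Finset.sum_const, smul_eq_mul]
    congr 1
    rw [Finset.card_univ, ← Nat.card_eq_fintype_card]
    · have hout : QuotientGroup.mk (Quotient.out q) = q := Quotient.out_eq q
      refine Nat.card_congr
        ⟨fun g => ⟨(Quotient.out q)⁻¹ * ↑g, QuotientGroup.eq.mp (hout.trans g.2.symm)⟩,
         fun v => ⟨Quotient.out q * ↑v, ?_⟩, fun g => ?_, fun v => ?_⟩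
      · refine (QuotientGroup.eq.mpr ?_).trans hout
        have h5 : (Quotient.out q * (↑v : Γ))⁻¹ * Quotient.out q = (↑v)⁻¹ := by group
        rw [h5]
        exact V.inv_mem v.2
      · apply Subtype.ext
        show Quotient.out q * ((Quotient.out q)⁻¹ * ↑g) = ↑g
        group
      · apply Subtype.ext
        show (Quotient.out q)⁻¹ * (Quotient.out q * ↑v) = ↑v
        group
  rw [hsplit] at hb
  rw [Finset.sum_congr rfl (fun q _ => hfib q)] at hb
  rw [← Finset.mul_sum] at hb
  rw [← Nat.card_eq_fintype_card (α := Γ), ← Subgroup.index_mul_card V] at hb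
  have hVpos : 0 < Nat.card V := Nat.card_pos
  have hkey : ∑ q : Γ ⧸ V, Nat.card {y : Y // a (Quotient.out q) y = y}
      = Fintype.card (Quotient (MulAction.orbitRel Γ Y)) * V.index := by
    apply Nat.eq_of_mul_eq_mul_left hVpos
    rw [hb]
    ring
  rw [finsum_eq_sum_of_fintype, hkey]
  exact dvd_mul_left _ _

def prodPermHom {Γ Y Y' : Type*} [Group Γ] (a : Γ →* Equiv.Perm Y)
    (b : Γ →* Equiv.Perm Y') : Γ →* Equiv.Perm (Y × Y') where
  toFun n := Equiv.prodCongr (a n) (b n)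
  map_one' := Equiv.ext fun yy => by simp
  map_mul' m n := Equiv.ext fun yy => by simp [Prod.map]

theorem card_fix_prod {Γ Y Y' : Type*} [Group Γ] (a : Γ →* Equiv.Perm Y)
    (b : Γ →* Equiv.Perm Y') (n : Γ) :
    Nat.card {yy : Y × Y' // prodPermHom a b n yy = yy}
      = Nat.card {y : Y // a n y = y} * Nat.card {y' : Y' // b n y' = y'} := by
  rw [← Nat.card_prod]
  apply Nat.card_congr
  exact
    { toFun := fun z => (⟨z.1.1, congrArg Prod.fst z.2⟩, ⟨z.1.2, congrArg Prod.snd z.2⟩)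
      invFun := fun w => ⟨(↑w.1, ↑w.2), Prod.ext w.1.2 w.2.2⟩
      left_inv := fun z => rfl
      right_inv := fun w => rfl }

end AuxBurnside


section AuxCF

/-- The ambient left-translation permutation action on the coset space. -/
noncomputable def bigHom (Pu : Subgroup G) (K : Subgroup G) :
    ↥Pu →* Equiv.Perm ((⊤ : Subgroup G) ⧸ K.subgroupOf ⊤) :=
  (MulAction.toPermHom (⊤ : Subgroup G) ((⊤ : Subgroup G) ⧸ K.subgroupOf ⊤)).comp
    (Subgroup.inclusion le_top)

/-- The defining predicate of the set `(G/K)_s^{(U,t)}`. -/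
def predY (u k : Subgroup G × L) (q : (⊤ : Subgroup G) ⧸ k.1.subgroupOf ⊤) : Prop :=
  ∃ a : (⊤ : Subgroup G), QuotientGroup.mk a = q ∧ u.1 ≤ conjS ↑a k.1 ∧ u.2 ≤ (↑a : G) • k.2

theorem invCountLe_eq_card_predY (u k : Subgroup G × L) :
    invCountLe (⊤ : Subgroup G) k u = Nat.card {q // predY u k q} := rfl

variable [Finite G] [Finite L] [Nonempty L]

include F in
theorem predY_smul {u : Subgroup G × L} {Pu : Subgroup G}
    (hPu2 : Pu ≤ NL (⊤ : Subgroup G) u) (k : Subgroup G × L) (n : ↥Pu)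
    (q : (⊤ : Subgroup G) ⧸ k.1.subgroupOf ⊤) :
    predY u k q ↔ predY u k (bigHom Pu k.1 n q) := by
  have hdot : dotL (↑n : G) u = u := (hPu2 n.2).2
  have hc : conjS (↑n : G) u.1 = u.1 := congrArg Prod.fst hdot
  have hs : (↑n : G) • u.2 = u.2 := congrArg Prod.snd hdot
  set g : G := (↑n : G) with hgdef
  have hcinv : conjS g⁻¹ u.1 = u.1 := by
    conv_lhs => rw [← hc]
    rw [conjS_mul, inv_mul_cancel, conjS_one]
  have hsinv : g⁻¹ • u.2 = u.2 := by
    conv_lhs => rw [← hs]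
    rw [inv_smul_smul]
  set n' : (⊤ : Subgroup G) := Subgroup.inclusion le_top n with hn'
  have hbig : ∀ q' : (⊤ : Subgroup G) ⧸ k.1.subgroupOf ⊤, bigHom Pu k.1 n q' = n' • q' :=
    fun _ => rfl
  constructor
  · rintro ⟨a, ha, c1, c2⟩
    refine ⟨n' * a, ?_, ?_, ?_⟩
    · rw [hbig, ← ha]; rfl
    · have hcoe : (↑(n' * a) : G) = g * ↑a := rfl
      rw [hcoe]
      conv_lhs => rw [← hc]
      rw [← conjS_mul]
      exact conjS_mono g c1
    · have hcoe : (↑(n' * a) : G) = g * ↑a := rfl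
      rw [hcoe]
      conv_lhs => rw [← hs]
      rw [mul_smul]
      exact F.smul_le g _ _ c2
  · rintro ⟨a, ha, c1, c2⟩
    refine ⟨n'⁻¹ * a, ?_, ?_, ?_⟩
    · rw [hbig] at ha
      have : QuotientGroup.mk (n'⁻¹ * a) = n'⁻¹ • (QuotientGroup.mk a :
          (⊤ : Subgroup G) ⧸ k.1.subgroupOf ⊤) := rfl
      rw [this, ha, inv_smul_smul]
    · have hcoe : (↑(n'⁻¹ * a) : G) = g⁻¹ * ↑a := rfl
      rw [hcoe]
      conv_lhs => rw [← hcinv]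
      rw [← conjS_mul]
      exact conjS_mono g⁻¹ c1
    · have hcoe : (↑(n'⁻¹ * a) : G) = g⁻¹ * ↑a := rfl
      rw [hcoe]
      conv_lhs => rw [← hsinv]
      rw [mul_smul]
      exact F.smul_le g⁻¹ _ _ c2

/-- The permutation action of `P u` on `(G/K)_s^{(U,t)}`. -/
noncomputable def actHom {u : Subgroup G × L} {Pu : Subgroup G}
    (hPu2 : Pu ≤ NL (⊤ : Subgroup G) u) (k : Subgroup G × L) :
    ↥Pu →* Equiv.Perm {q : (⊤ : Subgroup G) ⧸ k.1.subgroupOf ⊤ // predY u k q} where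
  toFun n := Equiv.Perm.subtypePerm (bigHom Pu k.1 n) (fun q => (predY_smul F hPu2 k n q).symm)
  map_one' := Equiv.ext fun y => Subtype.ext (by
    show bigHom Pu k.1 1 ↑y = ↑y
    rw [map_one]
    rfl)
  map_mul' m n := Equiv.ext fun y => Subtype.ext (by
    show bigHom Pu k.1 (m * n) ↑y = bigHom Pu k.1 m (bigHom Pu k.1 n ↑y)
    rw [map_mul]
    rfl)

theorem actHom_trivial {u : Subgroup G × L} {Pu : Subgroup G}
    (hPu2 : Pu ≤ NL (⊤ : Subgroup G) u) (k : Subgroup G × L) :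
    ∀ v ∈ u.1.subgroupOf Pu, actHom F hPu2 k v = 1 := by
  intro v hv
  apply Equiv.ext
  intro y
  apply Subtype.ext
  show bigHom Pu k.1 v ↑y = ↑y
  obtain ⟨a, ha, c1, c2⟩ := y.2
  rw [← ha]
  show QuotientGroup.mk ((Subgroup.inclusion le_top) v * a) = QuotientGroup.mk a
  apply QuotientGroup.eq.mpr
  rw [Subgroup.mem_subgroupOf]
  have hv' : (↑v : G) ∈ u.1 := hv
  have h6 : (↑a : G)⁻¹ * ↑v * ↑a ∈ k.1 := mem_conjS.mp (c1 hv')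
  have h7 := k.1.inv_mem h6
  have h8 : ((↑a : G)⁻¹ * ↑v * ↑a)⁻¹ = (↑a : G)⁻¹ * (↑v : G)⁻¹ * ↑a := by group
  rw [h8] at h7
  have h9 : (↑(((Subgroup.inclusion (le_top (a := Pu))) v * a)⁻¹ * a) : G)
      = (↑a : G)⁻¹ * (↑v : G)⁻¹ * ↑a := by
    have h10 : ((Subgroup.inclusion (le_top (a := Pu)) v : (⊤ : Subgroup G)) : G)
        = (↑v : G) := rfl
    push_cast [h10]
    group
  rw [h9]
  exact h7

end AuxCF


section AuxCF2

variable [Finite G] [Finite L] [Nonempty L]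
variable (R : RepsL F (⊤ : Subgroup G)) (X : Set (Subgroup G × L))
variable (hXact : ∀ g : G, ∀ x ∈ X, dotL g x ∈ X)
variable (hXS : ∀ x ∈ X, memS F ⊤ x)
variable (hA : ∀ x ∈ X, ∀ g ∈ NL (⊤ : Subgroup G) x,
      ∃! y : Subgroup G × L,
        (y ∈ X ∧ cyc g x.1 ≤ y.1 ∧ leastGE F (cyc g x.1) x.2 ≤ y.2) ∧
        ∀ z : Subgroup G × L,
          z ∈ X ∧ cyc g x.1 ≤ z.1 ∧ leastGE F (cyc g x.1) x.2 ≤ z.2 →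
          z.1 ≤ y.1 ∧ z.2 ≤ y.2 → z = y)

include R hXact hXS hA

theorem predY_fix_iff {u : Subgroup G × L} (huX : u ∈ X) {Pu : Subgroup G}
    (hPu2 : Pu ≤ NL (⊤ : Subgroup G) u) {k : Subgroup G × L} (hkX : k ∈ X) (n : ↥Pu)
    (q : (⊤ : Subgroup G) ⧸ k.1.subgroupOf ⊤) :
    (predY u k q ∧ bigHom Pu k.1 n q = q) ↔
      predY (minChoice F X u ↑n) k q := by
  have hu2 : u.2 ∈ F.S u.1 := (hXS u huX).2
  have hk2 : k.2 ∈ F.S k.1 := (hXS k hkX).2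
  have hgN : (↑n : G) ∈ NL (⊤ : Subgroup G) u := hPu2 n.2
  set g : G := (↑n : G)
  set m := minChoice F X u g with hm
  have hspec := minChoice_spec F R X hXact hXS hA huX hgN
  constructor
  · rintro ⟨⟨a, ha, c1, c2⟩, hfix⟩
    -- first: g ∈ conjS ↑a k.1
    have hmk : (QuotientGroup.mk ((Subgroup.inclusion le_top) n * a) :
        (⊤ : Subgroup G) ⧸ k.1.subgroupOf ⊤) = QuotientGroup.mk a := by
      rw [← ha] at hfix
      exact hfix
    have hmem := QuotientGroup.eq.mp hmk
    rw [Subgroup.mem_subgroupOf] at hmem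
    have hcoe : (↑(((Subgroup.inclusion (le_top (a := Pu))) n * a)⁻¹ * a) : G)
        = (↑a : G)⁻¹ * g⁻¹ * ↑a := by
      have h10 : ((Subgroup.inclusion (le_top (a := Pu)) n : (⊤ : Subgroup G)) : G)
          = g := rfl
      push_cast [h10]
      group
    rw [hcoe] at hmem
    have hmem2 : (↑a : G)⁻¹ * g * ↑a ∈ k.1 := by
      have := k.1.inv_mem hmem
      have he : ((↑a : G)⁻¹ * g⁻¹ * ↑a)⁻¹ = (↑a : G)⁻¹ * g * ↑a := by group
      rwa [he] at this
    have hgconj : g ∈ conjS (↑a : G) k.1 := mem_conjS.mpr hmem2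
    -- now apply minimality
    have hzX : dotL (↑a : G) k ∈ X := hXact _ k hkX
    have hcyc : cyc g u.1 ≤ conjS (↑a : G) k.1 := cyc_le hgconj c1
    have hs_mem : (↑a : G) • k.2 ∈ F.S (conjS (↑a : G) k.1) := by
      rw [F.conj_eq]
      exact ⟨k.2, hk2, rfl⟩
    have hres : ((↑a : G) • k.2) ⊓ F.top (cyc g u.1) ∈ F.S (cyc g u.1) :=
      F.res_mem hcyc _ hs_mem
    have htop : u.2 ≤ F.top (cyc g u.1) :=
      (F.le_top u.1 u.2 hu2).trans (F.top_mono (le_cyc g u.1))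
    have hinf : u.2 ≤ ((↑a : G) • k.2) ⊓ F.top (cyc g u.1) := le_inf c2 htop
    have hlg : leastGE F (cyc g u.1) u.2 ≤ (↑a : G) • k.2 := by
      refine le_trans ?_ (inf_le_left :
        ((↑a : G) • k.2) ⊓ F.top (cyc g u.1) ≤ (↑a : G) • k.2)
      exact (leastGE_spec F (exists_ge_in_cyc F R X hXact hXS hA hu2 g)).2 _ ⟨hres, hinf⟩
    have hmin := minChoice_min F R X hXact hXS hA huX hgN
      (z := dotL (↑a : G) k) ⟨hzX, hcyc, hlg⟩
    exact ⟨a, ha, hmin.1, hmin.2⟩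
  · rintro ⟨a, ha, d1, d2⟩
    have hc1 : u.1 ≤ conjS (↑a : G) k.1 :=
      ((le_cyc g u.1).trans hspec.1.2.1).trans d1
    have hc2 : u.2 ≤ (↑a : G) • k.2 :=
      ((le_leastGE_cyc F R X hXact hXS hA hu2 g).trans hspec.1.2.2).trans d2
    refine ⟨⟨a, ha, hc1, hc2⟩, ?_⟩
    have hgconj : g ∈ conjS (↑a : G) k.1 := d1 (hspec.1.2.1 (mem_cyc g u.1))
    have hmem2 := mem_conjS.mp hgconj
    have hmem : (↑a : G)⁻¹ * g⁻¹ * ↑a ∈ k.1 := by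
      have := k.1.inv_mem hmem2
      have he : ((↑a : G)⁻¹ * g * ↑a)⁻¹ = (↑a : G)⁻¹ * g⁻¹ * ↑a := by group
      rwa [he] at this
    rw [← ha]
    show (QuotientGroup.mk ((Subgroup.inclusion le_top) n * a) :
      (⊤ : Subgroup G) ⧸ k.1.subgroupOf ⊤) = QuotientGroup.mk a
    apply QuotientGroup.eq.mpr
    rw [Subgroup.mem_subgroupOf]
    have hcoe : (↑(((Subgroup.inclusion (le_top (a := Pu))) n * a)⁻¹ * a) : G)
        = (↑a : G)⁻¹ * g⁻¹ * ↑a := by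
      have h10 : ((Subgroup.inclusion (le_top (a := Pu)) n : (⊤ : Subgroup G)) : G)
          = g := rfl
      push_cast [h10]
      group
    rw [hcoe]
    exact hmem

theorem card_fix_actHom {u : Subgroup G × L} (huX : u ∈ X) {Pu : Subgroup G}
    (hPu2 : Pu ≤ NL (⊤ : Subgroup G) u) {k : Subgroup G × L} (hkX : k ∈ X) (n : ↥Pu) :
    Nat.card {y : {q : (⊤ : Subgroup G) ⧸ k.1.subgroupOf ⊤ // predY u k q} //
        actHom F hPu2 k n y = y}
      = invCountLe (⊤ : Subgroup G) k (minChoice F X u ↑n) := by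
  rw [invCountLe_eq_card_predY]
  apply Nat.card_congr
  refine Equiv.trans ?_ (Equiv.subtypeEquivRight
    (fun q => predY_fix_iff F R X hXact hXS hA huX hPu2 hkX n q))
  exact
    { toFun := fun y => ⟨↑y.1, y.1.2, congrArg Subtype.val y.2⟩
      invFun := fun z => ⟨⟨z.1, z.2.1⟩, Subtype.ext z.2.2⟩
      left_inv := fun y => rfl
      right_inv := fun z => rfl }

theorem index_dvd_sum_invCount {u : Subgroup G × L} (huX : u ∈ X) {Pu : Subgroup G}
    (hPu2 : Pu ≤ NL (⊤ : Subgroup G) u) {k : Subgroup G × L} (hkX : k ∈ X) :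
    (u.1.subgroupOf Pu).index ∣
      ∑ᶠ q : ↥Pu ⧸ u.1.subgroupOf Pu,
        invCountLe (⊤ : Subgroup G) k (minChoice F X u ↑(Quotient.out q)) := by
  have h := index_dvd_sum_fix (u.1.subgroupOf Pu) (actHom F hPu2 k)
    (actHom_trivial F hPu2 k)
  have he : ∀ q : ↥Pu ⧸ u.1.subgroupOf Pu,
      Nat.card {y // actHom F hPu2 k (Quotient.out q) y = y}
        = invCountLe (⊤ : Subgroup G) k (minChoice F X u ↑(Quotient.out q)) :=
    fun q => card_fix_actHom F R X hXact hXS hA huX hPu2 hkX (Quotient.out q)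
  rwa [finsum_congr he] at h

theorem index_dvd_sum_invCount_mul {u : Subgroup G × L} (huX : u ∈ X) {Pu : Subgroup G}
    (hPu2 : Pu ≤ NL (⊤ : Subgroup G) u) {k k' : Subgroup G × L} (hkX : k ∈ X)
    (hkX' : k' ∈ X) :
    (u.1.subgroupOf Pu).index ∣
      ∑ᶠ q : ↥Pu ⧸ u.1.subgroupOf Pu,
        invCountLe (⊤ : Subgroup G) k (minChoice F X u ↑(Quotient.out q)) *
        invCountLe (⊤ : Subgroup G) k' (minChoice F X u ↑(Quotient.out q)) := by
  have h := index_dvd_sum_fix (u.1.subgroupOf Pu)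
    (prodPermHom (actHom F hPu2 k) (actHom F hPu2 k'))
    (by
      intro v hv
      have h1 := actHom_trivial F hPu2 k v hv
      have h2 := actHom_trivial F hPu2 k' v hv
      apply Equiv.ext
      intro yy
      show ((actHom F hPu2 k v).prodCongr (actHom F hPu2 k' v)) yy = yy
      rw [h1, h2]
      rfl)
  have he : ∀ q : ↥Pu ⧸ u.1.subgroupOf Pu,
      Nat.card {yy // prodPermHom (actHom F hPu2 k) (actHom F hPu2 k') (Quotient.out q) yy = yy}
        = invCountLe (⊤ : Subgroup G) k (minChoice F X u ↑(Quotient.out q)) *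
          invCountLe (⊤ : Subgroup G) k' (minChoice F X u ↑(Quotient.out q)) := by
    intro q
    rw [card_fix_prod]
    rw [card_fix_actHom F R X hXact hXS hA huX hPu2 hkX (Quotient.out q),
      card_fix_actHom F R X hXact hXS hA huX hPu2 hkX' (Quotient.out q)]
  rwa [finsum_congr he] at h

end AuxCF2


section AuxZp

theorem locMon_le_nonZeroDivisors (p : ℕ) (hp : p = 0 ∨ p.Prime) :
    locMon p hp ≤ nonZeroDivisors ℤ := by
  intro k hk
  have hk' : (if p = 0 then IsUnit k else ¬ (p : ℤ) ∣ k) := hk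
  apply mem_nonZeroDivisors_of_ne_zero
  rcases hp with h | h
  · rw [if_pos h] at hk'
    exact hk'.ne_zero
  · rw [if_neg h.ne_zero] at hk'
    intro h0
    exact hk' (h0 ▸ dvd_zero _)

theorem natCast_Zp_injective (p : ℕ) (hp : p = 0 ∨ p.Prime) {a b : ℕ}
    (hab : (a : Zp p hp) = (b : Zp p hp)) : a = b := by
  have hinj := IsLocalization.injective (Zp p hp) (locMon_le_nonZeroDivisors p hp)
  have h2 : (algebraMap ℤ (Zp p hp)) (a : ℤ) = (algebraMap ℤ (Zp p hp)) (b : ℤ) := by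
    rw [map_natCast, map_natCast]
    exact hab
  exact_mod_cast hinj h2

theorem natCast_Zp_ne_zero (p : ℕ) (hp : p = 0 ∨ p.Prime) {n : ℕ} (hn : n ≠ 0) :
    (n : Zp p hp) ≠ 0 := by
  intro h
  exact hn (natCast_Zp_injective p hp (h.trans (Nat.cast_zero).symm))

theorem sylCard_unit_mul (p : ℕ) (hp : p = 0 ∨ p.Prime) (W : ℕ) (hW : W ≠ 0) :
    ∃ c : Zp p hp, IsUnit c ∧ (W : Zp p hp) = (sylCard p W : Zp p hp) * c := by
  by_cases h : p = 0
  · exact ⟨1, isUnit_one, by rw [sylCard, if_pos h, mul_one]⟩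
  · have hpr : p.Prime := hp.resolve_left h
    refine ⟨((W / p ^ (W.factorization p) : ℕ) : Zp p hp), ?_, ?_⟩
    · have hmem : ((W / p ^ (W.factorization p) : ℕ) : ℤ) ∈ locMon p hp := by
        show (if p = 0 then IsUnit (((W / p ^ (W.factorization p) : ℕ) : ℤ))
          else ¬ (p : ℤ) ∣ ((W / p ^ (W.factorization p) : ℕ) : ℤ))
        rw [if_neg h]
        intro hdvd
        exact Nat.not_dvd_ordCompl hpr hW (by exact_mod_cast hdvd)
      have hu := IsLocalization.map_units (M := locMon p hp) (Zp p hp) ⟨_, hmem⟩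
      rwa [map_natCast] at hu
    · rw [sylCard, if_neg h, ← Nat.cast_mul, Nat.ordProj_mul_ordCompl_eq_self]

end AuxZp

theorem out_mem_subgroupOf_iff {Γ : Type*} [Group Γ] (V : Subgroup Γ) (q : Γ ⧸ V) :
    Quotient.out q ∈ V ↔ q = QuotientGroup.mk 1 := by
  have hout : QuotientGroup.mk (Quotient.out q) = q := Quotient.out_eq q
  constructor
  · intro hv
    rw [← hout]
    apply QuotientGroup.eq.mpr
    rw [mul_one]
    exact V.inv_mem hv
  · intro h1
    have := QuotientGroup.eq.mp (hout.trans h1)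
    rw [mul_one] at this
    rw [← V.inv_mem_iff]
    exact this

theorem exists_rel_maximal {α : Type*} [Fintype α] (r : α → α → Prop)
    (htrans : ∀ a b c : α, r a b → r b c → r a c)
    (hanti : ∀ a b : α, r a b → r b a → a = b)
    (s : Finset α) (hrefl : ∀ a ∈ s, r a a) (hs : s.Nonempty) :
    ∃ u ∈ s, ∀ k ∈ s, r u k → k = u := by
  classical
  obtain ⟨u, hu, hmax⟩ := s.exists_max_image (fun a => (s.filter (fun b => r b a)).card) hs
  refine ⟨u, hu, fun k hk hrel => ?_⟩
  by_contra hne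
  have hsub : s.filter (fun b => r b u) ⊆ s.filter (fun b => r b k) := by
    intro b hb
    rw [Finset.mem_filter] at hb ⊢
    exact ⟨hb.1, htrans _ _ _ hb.2 hrel⟩
  have hkmem : k ∈ s.filter (fun b => r b k) := Finset.mem_filter.mpr ⟨hk, hrefl k hk⟩
  have hknot : k ∉ s.filter (fun b => r b u) := by
    rw [Finset.mem_filter]
    rintro ⟨-, hku⟩
    exact hne (hanti _ _ hku hrel)
  have hlt : (s.filter (fun b => r b u)).card < (s.filter (fun b => r b k)).card :=
    Finset.card_lt_card ((Finset.ssubset_iff_of_subset hsub).mpr ⟨k, hkmem, hknot⟩)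
  exact absurd (hmax k hk) (not_le.mpr hlt)

section AuxMain

variable [Finite G] [Finite L] [Nonempty L]
variable (R : RepsL F (⊤ : Subgroup G)) (X : Set (Subgroup G × L))
variable (hXact : ∀ g : G, ∀ x ∈ X, dotL g x ∈ X)
variable (hXS : ∀ x ∈ X, memS F ⊤ x)
variable (hA : ∀ x ∈ X, ∀ g ∈ NL (⊤ : Subgroup G) x,
      ∃! y : Subgroup G × L,
        (y ∈ X ∧ cyc g x.1 ≤ y.1 ∧ leastGE F (cyc g x.1) x.2 ≤ y.2) ∧
        ∀ z : Subgroup G × L,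
          z ∈ X ∧ cyc g x.1 ≤ z.1 ∧ leastGE F (cyc g x.1) x.2 ≤ z.2 →
          z.1 ≤ y.1 ∧ z.2 ≤ y.2 → z = y)
variable (P : ↥(R.R ∩ X) → Subgroup G)
variable (hP : ∀ u : ↥(R.R ∩ X), u.1.1 ≤ P u ∧ P u ≤ NL (⊤ : Subgroup G) u.1 ∧
      (u.1.1.subgroupOf (P u)).index = sylCard p (WCardL (⊤ : Subgroup G) u.1))

theorem phiX_zero : phiX F p hp R X 0 = 0 := by
  funext u
  simp [phiX]

theorem phiX_add (f g : ↥(R.R ∩ X) → Zp p hp) :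
    phiX F p hp R X (f + g) = phiX F p hp R X f + phiX F p hp R X g := by
  letI : Fintype ↥(R.R ∩ X) := Fintype.ofFinite _
  funext u
  simp only [phiX, Pi.add_apply, finsum_eq_sum_of_fintype]
  rw [← Finset.sum_add_distrib]
  apply Finset.sum_congr rfl
  intro k _
  rw [add_mul]

theorem phiX_sub (f g : ↥(R.R ∩ X) → Zp p hp) :
    phiX F p hp R X (f - g) = phiX F p hp R X f - phiX F p hp R X g := by
  letI : Fintype ↥(R.R ∩ X) := Fintype.ofFinite _
  funext u
  simp only [phiX, Pi.sub_apply, finsum_eq_sum_of_fintype]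
  rw [← Finset.sum_sub_distrib]
  apply Finset.sum_congr rfl
  intro k _
  rw [sub_mul]

theorem phiX_smul (c : Zp p hp) (f : ↥(R.R ∩ X) → Zp p hp) :
    phiX F p hp R X (c • f) = c • phiX F p hp R X f := by
  letI : Fintype ↥(R.R ∩ X) := Fintype.ofFinite _
  funext u
  simp only [phiX, Pi.smul_apply, smul_eq_mul, finsum_eq_sum_of_fintype, Finset.mul_sum]
  apply Finset.sum_congr rfl
  intro k _
  ring

include hp R hXact hXS hA P hP

/-- The representative of the orbit of the minimal pair at a coset. -/
noncomputable def repM (u : ↥(R.R ∩ X)) (q : ↥(P u) ⧸ u.1.1.subgroupOf (P u)) :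
    ↥(R.R ∩ X) :=
  repX F R X hXact hXS hA
    (minChoice_mem_X F R X hXact hXS hA u.2.2 ((hP u).2.1 (Quotient.out q).2))

theorem psiX_apply (x : ↥(R.R ∩ X) → Zp p hp) (u : ↥(R.R ∩ X)) :
    psiX F p hp R X P x u = Ideal.Quotient.mk _
      (∑ᶠ q : ↥(P u) ⧸ u.1.1.subgroupOf (P u),
        x (repM F p R X hXact hXS hA P hP u q)) := by
  show Ideal.Quotient.mk _ _ = Ideal.Quotient.mk _ _
  congr 1
  apply finsum_congr
  intro q
  exact coordAtL_eq F R X hXact hXS hA x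
    (minChoice_mem_X F R X hXact hXS hA u.2.2 ((hP u).2.1 (Quotient.out q).2))

theorem relP_repM (u : ↥(R.R ∩ X)) (q : ↥(P u) ⧸ u.1.1.subgroupOf (P u)) :
    relP (u : Subgroup G × L) ↑(repM F p R X hXact hXS hA P hP u q) := by
  have h1 : relP (u : Subgroup G × L)
      (minChoice F X u.1 ↑(Quotient.out q)) :=
    relP_minChoice F R X hXact hXS hA u.2.2 (hXS u.1 u.2.2).2 ((hP u).2.1 (Quotient.out q).2)
  obtain ⟨g0, hg0⟩ := repX_spec F R X hXact hXS hA
    (minChoice_mem_X F R X hXact hXS hA u.2.2 ((hP u).2.1 (Quotient.out q).2))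
  refine relP_trans F h1 ?_
  unfold repM
  rw [← hg0]
  exact relP_self_dot g0 _

theorem repM_eq_self_iff (u : ↥(R.R ∩ X)) (q : ↥(P u) ⧸ u.1.1.subgroupOf (P u)) :
    repM F p R X hXact hXS hA P hP u q = u ↔ q = QuotientGroup.mk 1 := by
  rw [← out_mem_subgroupOf_iff]
  constructor
  · intro h
    obtain ⟨g0, hg0⟩ := repX_spec F R X hXact hXS hA
      (minChoice_mem_X F R X hXact hXS hA u.2.2 ((hP u).2.1 (Quotient.out q).2))
    rw [repM] at h
    rw [h] at hg0
    have hmem : (↑(Quotient.out q) : G) ∈ u.1.1 :=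
      mem_of_orbit_minChoice F R X hXact hXS hA u.2.2 ((hP u).2.1 (Quotient.out q).2) hg0
    rw [Subgroup.mem_subgroupOf]
    exact hmem
  · intro h
    have hmem : (↑(Quotient.out q) : G) ∈ u.1.1 := h
    have hmc : minChoice F X u.1 ↑(Quotient.out q) = u.1 :=
      minChoice_of_mem F R X hXact hXS hA u.2.2 (hXS u.1 u.2.2).2 hmem
        ((hP u).2.1 (Quotient.out q).2)
    have key : ∀ (y : Subgroup G × L) (hy : y ∈ X), y = (u : Subgroup G × L) →
        repX F R X hXact hXS hA hy = u := by
      rintro y hy rfl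
      exact repX_coe F R X hXact hXS hA u
    exact key _ _ hmc

theorem psiX_sub (x y : ↥(R.R ∩ X) → Zp p hp) :
    psiX F p hp R X P (x - y) = psiX F p hp R X P x - psiX F p hp R X P y := by
  funext u
  letI : Fintype (↥(P u) ⧸ u.1.1.subgroupOf (P u)) := Fintype.ofFinite _
  rw [Pi.sub_apply, psiX_apply F p hp R X hXact hXS hA P hP,
    psiX_apply F p hp R X hXact hXS hA P hP, psiX_apply F p hp R X hXact hXS hA P hP,
    ← map_sub]
  congr 1
  rw [finsum_eq_sum_of_fintype, finsum_eq_sum_of_fintype, finsum_eq_sum_of_fintype,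
    ← Finset.sum_sub_distrib]
  apply Finset.sum_congr rfl
  intro q _
  rfl

theorem psiX_add (x y : ↥(R.R ∩ X) → Zp p hp) :
    psiX F p hp R X P (x + y) = psiX F p hp R X P x + psiX F p hp R X P y := by
  funext u
  letI : Fintype (↥(P u) ⧸ u.1.1.subgroupOf (P u)) := Fintype.ofFinite _
  rw [Pi.add_apply, psiX_apply F p hp R X hXact hXS hA P hP,
    psiX_apply F p hp R X hXact hXS hA P hP, psiX_apply F p hp R X hXact hXS hA P hP,
    ← map_add]
  congr 1
  rw [finsum_eq_sum_of_fintype, finsum_eq_sum_of_fintype, finsum_eq_sum_of_fintype,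
    ← Finset.sum_add_distrib]
  apply Finset.sum_congr rfl
  intro q _
  rfl

theorem invCountLe_repM (k u : ↥(R.R ∩ X)) (q : ↥(P u) ⧸ u.1.1.subgroupOf (P u)) :
    invCountLe (⊤ : Subgroup G) (k : Subgroup G × L)
        ((repM F p R X hXact hXS hA P hP u q : ↥(R.R ∩ X)) : Subgroup G × L)
      = invCountLe (⊤ : Subgroup G) (k : Subgroup G × L)
          (minChoice F X u.1 ↑(Quotient.out q)) := by
  obtain ⟨g0, hg0⟩ := repX_spec F R X hXact hXS hA
    (minChoice_mem_X F R X hXact hXS hA u.2.2 ((hP u).2.1 (Quotient.out q).2))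
  rw [repM, ← hg0, invCountLe_dotL F]

theorem psiX_phiX (f : ↥(R.R ∩ X) → Zp p hp) :
    psiX F p hp R X P (phiX F p hp R X f) = 0 := by
  funext u
  letI : Fintype (↥(P u) ⧸ u.1.1.subgroupOf (P u)) := Fintype.ofFinite _
  letI : Fintype ↥(R.R ∩ X) := Fintype.ofFinite _
  rw [psiX_apply F p hp R X hXact hXS hA P hP]
  simp only [Pi.zero_apply]
  apply Ideal.Quotient.eq_zero_iff_mem.mpr
  have hstep : ∀ q : ↥(P u) ⧸ u.1.1.subgroupOf (P u),
      phiX F p hp R X f (repM F p R X hXact hXS hA P hP u q)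
      = ∑ k : ↥(R.R ∩ X), f k * (invCountLe (⊤ : Subgroup G) (k : Subgroup G × L)
          (minChoice F X u.1 ↑(Quotient.out q)) : Zp p hp) := by
    intro q
    show (∑ᶠ k : ↥(R.R ∩ X), f k * _) = _
    rw [finsum_eq_sum_of_fintype]
    apply Finset.sum_congr rfl
    intro k _
    rw [invCountLe_repM F p hp R X hXact hXS hA P hP]
  rw [finsum_eq_sum_of_fintype, Finset.sum_congr rfl (fun q _ => hstep q),
    Finset.sum_comm]
  apply Ideal.sum_mem
  intro k _
  rw [← Finset.mul_sum]
  apply Ideal.mul_mem_left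
  rw [← Nat.cast_sum]
  apply Ideal.mem_span_singleton.mpr
  apply Nat.cast_dvd_cast
  have hdvd := index_dvd_sum_invCount F R X hXact hXS hA u.2.2 (hP u).2.1 k.2.2
  rw [(hP u).2.2] at hdvd
  rwa [finsum_eq_sum_of_fintype] at hdvd

theorem psiX_phiX_mul (f f' : ↥(R.R ∩ X) → Zp p hp) :
    psiX F p hp R X P (phiX F p hp R X f * phiX F p hp R X f') = 0 := by
  funext u
  letI : Fintype (↥(P u) ⧸ u.1.1.subgroupOf (P u)) := Fintype.ofFinite _
  letI : Fintype ↥(R.R ∩ X) := Fintype.ofFinite _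
  rw [psiX_apply F p hp R X hXact hXS hA P hP]
  simp only [Pi.zero_apply]
  apply Ideal.Quotient.eq_zero_iff_mem.mpr
  set c : ↥(R.R ∩ X) → ↥(P u) ⧸ u.1.1.subgroupOf (P u) → ℕ := fun k q =>
    invCountLe (⊤ : Subgroup G) (k : Subgroup G × L)
      (minChoice F X u.1 ↑(Quotient.out q)) with hc
  have hstep : ∀ q : ↥(P u) ⧸ u.1.1.subgroupOf (P u),
      (phiX F p hp R X f * phiX F p hp R X f') (repM F p R X hXact hXS hA P hP u q)
      = ∑ k : ↥(R.R ∩ X), ∑ k' : ↥(R.R ∩ X),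
          (f k * f' k') * ((c k q : Zp p hp) * (c k' q : Zp p hp)) := by
    intro q
    have h1 : ∀ (g : ↥(R.R ∩ X) → Zp p hp),
        phiX F p hp R X g (repM F p R X hXact hXS hA P hP u q)
        = ∑ k : ↥(R.R ∩ X), g k * (c k q : Zp p hp) := by
      intro g
      show (∑ᶠ k : ↥(R.R ∩ X), g k * _) = _
      rw [finsum_eq_sum_of_fintype]
      apply Finset.sum_congr rfl
      intro k _
      rw [invCountLe_repM F p hp R X hXact hXS hA P hP]
    rw [Pi.mul_apply, h1 f, h1 f', Finset.sum_mul_sum]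
    apply Finset.sum_congr rfl
    intro k _
    apply Finset.sum_congr rfl
    intro k' _
    ring
  rw [finsum_eq_sum_of_fintype, Finset.sum_congr rfl (fun q _ => hstep q),
    Finset.sum_comm]
  apply Ideal.sum_mem
  intro k _
  rw [Finset.sum_comm]
  apply Ideal.sum_mem
  intro k' _
  rw [← Finset.mul_sum]
  apply Ideal.mul_mem_left
  have hcast : ∑ q : ↥(P u) ⧸ u.1.1.subgroupOf (P u), (c k q : Zp p hp) * (c k' q : Zp p hp)
      = ((∑ q : ↥(P u) ⧸ u.1.1.subgroupOf (P u), c k q * c k' q : ℕ) : Zp p hp) := by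
    rw [Nat.cast_sum]
    apply Finset.sum_congr rfl
    intro q _
    rw [Nat.cast_mul]
  rw [hcast]
  apply Ideal.mem_span_singleton.mpr
  apply Nat.cast_dvd_cast
  have hdvd := index_dvd_sum_invCount_mul F R X hXact hXS hA u.2.2 (hP u).2.1 k.2.2 k'.2.2
  rw [(hP u).2.2] at hdvd
  rwa [finsum_eq_sum_of_fintype] at hdvd

theorem psiX_one : psiX F p hp R X P (fun _ => (1 : Zp p hp)) = 0 := by
  funext u
  letI : Fintype (↥(P u) ⧸ u.1.1.subgroupOf (P u)) := Fintype.ofFinite _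
  rw [psiX_apply F p hp R X hXact hXS hA P hP]
  simp only [Pi.zero_apply]
  apply Ideal.Quotient.eq_zero_iff_mem.mpr
  rw [finsum_eq_sum_of_fintype, Finset.sum_const, Finset.card_univ, nsmul_eq_mul, mul_one]
  have hcard : ((Fintype.card (↥(P u) ⧸ u.1.1.subgroupOf (P u)) : ℕ) : Zp p hp)
      = ((sylCard p (WCardL (⊤ : Subgroup G) u.1) : ℕ) : Zp p hp) := by
    rw [← Nat.card_eq_fintype_card, ← Subgroup.index_eq_card, (hP u).2.2]
  rw [hcard]
  exact Ideal.mem_span_singleton.mpr dvd_rfl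

end AuxMain

/-- For a `G`-stable subset `X ⊆ S(G, M_L)` satisfying Condition (A),
the sequence `0 → Ω(G,X)_(p) → Ω̃(G,X)_(p) → Obs(G,X)_(p) → 0` is exact, and
`Ω(G,X)_(p)` admits a `ℤ_(p)`-algebra structure for which `φ_X^{(p)}` is an injective
`ℤ_(p)`-algebra homomorphism into the product ring (equivalently, the range of
`φ_X^{(p)}` is a `ℤ_(p)`-subalgebra of `∏ ℤ_(p)`). -/
theorem partial_lattice_burnside [Finite G] [Finite L] [Nonempty L]
    (R : RepsL F (⊤ : Subgroup G)) (X : Set (Subgroup G × L))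
    (hXact : ∀ g : G, ∀ x ∈ X, dotL g x ∈ X)
    (hXS : ∀ x ∈ X, memS F ⊤ x)
    (hA : ∀ x ∈ X, ∀ g ∈ NL (⊤ : Subgroup G) x,
      ∃! y : Subgroup G × L,
        (y ∈ X ∧ cyc g x.1 ≤ y.1 ∧ leastGE F (cyc g x.1) x.2 ≤ y.2) ∧
        ∀ z : Subgroup G × L,
          z ∈ X ∧ cyc g x.1 ≤ z.1 ∧ leastGE F (cyc g x.1) x.2 ≤ z.2 →
          z.1 ≤ y.1 ∧ z.2 ≤ y.2 → z = y)
    (P : ↥(R.R ∩ X) → Subgroup G)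
    (hP : ∀ u : ↥(R.R ∩ X), u.1.1 ≤ P u ∧ P u ≤ NL (⊤ : Subgroup G) u.1 ∧
      (u.1.1.subgroupOf (P u)).index = sylCard p (WCardL (⊤ : Subgroup G) u.1)) :
    Function.Injective (phiX F p hp R X) ∧
    Function.Exact (phiX F p hp R X) (psiX F p hp R X P) ∧
    Function.Surjective (psiX F p hp R X P) ∧
    ∃ Salg : Subalgebra (Zp p hp) (↥(R.R ∩ X) → Zp p hp),
      (Salg : Set (↥(R.R ∩ X) → Zp p hp)) = Set.range (phiX F p hp R X) := by
  classical
  letI : Fintype ↥(R.R ∩ X) := Fintype.ofFinite _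
  letI : IsDomain (Zp p hp) :=
    IsLocalization.isDomain_localization (locMon_le_nonZeroDivisors p hp)
  set r : ↥(R.R ∩ X) → ↥(R.R ∩ X) → Prop :=
    fun a b => relP (a : Subgroup G × L) ↑b with hrdef
  have hrefl : ∀ a, r a a := fun a => relP_refl _
  have htrans : ∀ a b c, r a b → r b c → r a c := fun _ _ _ h1 h2 => relP_trans F h1 h2
  have hanti : ∀ a b, r a b → r b a → a = b :=
    fun _ _ h1 h2 => rep_rel_antisymm F R X hXact hXS hA h1 h2
  have hdiagW : ∀ u : ↥(R.R ∩ X),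
      invCountLe (⊤ : Subgroup G) (u : Subgroup G × L) ↑u = WCardL ⊤ u.1 :=
    fun u => invCountLe_self_eq F (hXS u.1 u.2.2).2
  have hWne : ∀ u : ↥(R.R ∩ X), WCardL (⊤ : Subgroup G) u.1 ≠ 0 := fun u =>
    Subgroup.index_ne_zero_of_finite
  -- injectivity of φ
  have hker0 : ∀ f, phiX F p hp R X f = 0 → f = 0 := by
    intro f hf
    by_contra hne
    have hsupp : (Finset.univ.filter (fun k : ↥(R.R ∩ X) => f k ≠ 0)).Nonempty := by
      obtain ⟨k, hk⟩ := Function.ne_iff.mp hne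
      exact ⟨k, Finset.mem_filter.mpr ⟨Finset.mem_univ _, hk⟩⟩
    obtain ⟨u, hu, humax⟩ := exists_rel_maximal r htrans hanti _ (fun a _ => hrefl a) hsupp
    have hu0 : f u ≠ 0 := (Finset.mem_filter.mp hu).2
    have heval := congrFun hf u
    rw [Pi.zero_apply] at heval
    have heval2 : (∑ k : ↥(R.R ∩ X),
        f k * (invCountLe (⊤ : Subgroup G) (k : Subgroup G × L) ↑u : Zp p hp)) = 0 := by
      rw [← finsum_eq_sum_of_fintype]
      exact heval
    rw [Finset.sum_eq_single u] at heval2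
    · have hM : ((invCountLe (⊤ : Subgroup G) (u : Subgroup G × L) ↑u : ℕ) : Zp p hp) ≠ 0 :=
        natCast_Zp_ne_zero p hp (invCountLe_self_ne_zero _)
      rcases mul_eq_zero.mp heval2 with h | h
      · exact hu0 h
      · exact hM h
    · intro k _ hkne
      by_cases hfk : f k = 0
      · rw [hfk, zero_mul]
      · by_cases hM : invCountLe (⊤ : Subgroup G) (k : Subgroup G × L) ↑u = 0
        · rw [hM, Nat.cast_zero, mul_zero]
        · exact absurd
            (humax k (Finset.mem_filter.mpr ⟨Finset.mem_univ _, hfk⟩)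
              (invCountLe_ne_zero_relP hM)) hkne
    · intro hnot
      exact absurd (Finset.mem_univ u) hnot
  have hinj : Function.Injective (phiX F p hp R X) := by
    intro f g hfg
    have h0 := hker0 (f - g) (by rw [phiX_sub F p hp R X, hfg, sub_self])
    exact sub_eq_zero.mp h0
  -- abbreviations
  have hpsi_sub := psiX_sub F p hp R X hXact hXS hA P hP
  have hpsi_add := psiX_add F p hp R X hXact hXS hA P hP
  have hpsi_phi := psiX_phiX F p hp R X hXact hXS hA P hP
  have hpsizero : psiX F p hp R X P 0 = 0 := by
    have h := hpsi_sub 0 0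
    rw [sub_self] at h
    rw [h, sub_self]
  have hphidelta : ∀ (c : Zp p hp) (u v : ↥(R.R ∩ X)),
      phiX F p hp R X (fun k => if k = u then c else 0) v
        = c * (invCountLe (⊤ : Subgroup G) (u : Subgroup G × L) ↑v : Zp p hp) := by
    intro c u v
    show (∑ᶠ k : ↥(R.R ∩ X), _) = _
    rw [finsum_eq_sum_of_fintype, Finset.sum_eq_single u]
    · show (if u = u then c else 0) * _ = _
      rw [if_pos rfl]
    · intro k _ hkne
      show (if k = u then c else 0) * _ = 0
      rw [if_neg hkne, zero_mul]
    · intro h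
      exact absurd (Finset.mem_univ u) h
  -- kernel of ψ is contained in the range of φ
  have hker_range : ∀ y, psiX F p hp R X P y = 0 → ∃ f, phiX F p hp R X f = y := by
    have hmain : ∀ (n : ℕ) (y : ↥(R.R ∩ X) → Zp p hp),
        (Finset.univ.filter (fun k => ∃ j, y j ≠ 0 ∧ r k j)).card ≤ n →
        psiX F p hp R X P y = 0 → ∃ f, phiX F p hp R X f = y := by
      intro n
      induction n with
      | zero =>
        intro y hcard hy
        refine ⟨0, ?_⟩
        rw [phiX_zero F p hp R X]
        funext v
        rw [Pi.zero_apply]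
        by_contra hv
        have hmem : v ∈ Finset.univ.filter (fun k => ∃ j, y j ≠ 0 ∧ r k j) :=
          Finset.mem_filter.mpr ⟨Finset.mem_univ _, ⟨v, fun h => hv h.symm, hrefl v⟩⟩
        have := Finset.card_pos.mpr ⟨v, hmem⟩
        omega
      | succ n ih =>
        intro y hcard hy
        by_cases hz : ∀ v, y v = 0
        · refine ⟨0, ?_⟩
          rw [phiX_zero F p hp R X]
          funext v
          rw [Pi.zero_apply, hz v]
        · have hsupp : (Finset.univ.filter (fun k : ↥(R.R ∩ X) => y k ≠ 0)).Nonempty := by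
            push_neg at hz
            obtain ⟨v, hv⟩ := hz
            exact ⟨v, Finset.mem_filter.mpr ⟨Finset.mem_univ _, hv⟩⟩
          obtain ⟨u, hu, humax⟩ :=
            exists_rel_maximal r htrans hanti _ (fun a _ => hrefl a) hsupp
          have hu0 : y u ≠ 0 := (Finset.mem_filter.mp hu).2
          have hcong := congrFun hy u
          rw [psiX_apply F p hp R X hXact hXS hA P hP, Pi.zero_apply] at hcong
          replace hcong := Ideal.Quotient.eq_zero_iff_mem.mp hcong
          letI : Fintype (↥(P u) ⧸ u.1.1.subgroupOf (P u)) := Fintype.ofFinite _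
          have hsum : (∑ᶠ q : ↥(P u) ⧸ u.1.1.subgroupOf (P u),
              y (repM F p R X hXact hXS hA P hP u q)) = y u := by
            rw [finsum_eq_sum_of_fintype, Finset.sum_eq_single (QuotientGroup.mk 1)]
            · rw [(repM_eq_self_iff F p hp R X hXact hXS hA P hP u _).mpr rfl]
            · intro q _ hqne
              by_contra hyne
              have hne2 : repM F p R X hXact hXS hA P hP u q ≠ u := fun he =>
                hqne ((repM_eq_self_iff F p hp R X hXact hXS hA P hP u q).mp he)
              have hrel : r u (repM F p R X hXact hXS hA P hP u q) :=
                relP_repM F p hp R X hXact hXS hA P hP u q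
              exact hne2 (humax _
                (Finset.mem_filter.mpr ⟨Finset.mem_univ _, hyne⟩) hrel)
            · intro h
              exact absurd (Finset.mem_univ _) h
          rw [hsum] at hcong
          obtain ⟨d, hd⟩ := Ideal.mem_span_singleton.mp hcong
          obtain ⟨cu, hcu, hWc⟩ := sylCard_unit_mul p hp (WCardL (⊤ : Subgroup G) u.1) (hWne u)
          obtain ⟨cuu, hcuu⟩ := hcu
          set cc : Zp p hp := ↑cuu⁻¹ * d with hcc
          have hyu : y u
              = (invCountLe (⊤ : Subgroup G) (u : Subgroup G × L) ↑u : Zp p hp) * cc := by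
            have h1 : ((WCardL (⊤ : Subgroup G) u.1 : ℕ) : Zp p hp) * cc
                = (sylCard p (WCardL (⊤ : Subgroup G) u.1) : Zp p hp) * d := by
              rw [hWc, ← hcuu, hcc, mul_assoc, ← mul_assoc (cuu : Zp p hp),
                Units.mul_inv, one_mul]
            rw [hdiagW u, h1, ← hd]
          set f0 : ↥(R.R ∩ X) → Zp p hp := fun k => if k = u then cc else 0 with hf0
          set y' := y - phiX F p hp R X f0 with hy'
          have hy'u : y' u = 0 := by
            rw [hy', Pi.sub_apply, hphidelta cc u u, hyu]
            ring
          have hpsy' : psiX F p hp R X P y' = 0 := by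
            rw [hy', hpsi_sub, hy, hpsi_phi f0, sub_self]
          have hsub : Finset.univ.filter (fun k => ∃ j, y' j ≠ 0 ∧ r k j)
              ⊆ Finset.univ.filter (fun k => ∃ j, y j ≠ 0 ∧ r k j) := by
            intro k hk
            obtain ⟨j, hj0, hjr⟩ := (Finset.mem_filter.mp hk).2
            by_cases hyj : y j = 0
            · have hphij : phiX F p hp R X f0 j ≠ 0 := fun h0 =>
                hj0 (by rw [hy', Pi.sub_apply, hyj, h0, sub_zero])
              rw [hphidelta] at hphij
              have hM : invCountLe (⊤ : Subgroup G) (u : Subgroup G × L) ↑j ≠ 0 := fun h0 =>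
                hphij (by rw [h0, Nat.cast_zero, mul_zero])
              exact Finset.mem_filter.mpr ⟨Finset.mem_univ _,
                ⟨u, hu0, htrans _ _ _ hjr (invCountLe_ne_zero_relP hM)⟩⟩
            · exact Finset.mem_filter.mpr ⟨Finset.mem_univ _, ⟨j, hyj, hjr⟩⟩
          have hnotmem : u ∉ Finset.univ.filter (fun k => ∃ j, y' j ≠ 0 ∧ r k j) := by
            intro hmem
            obtain ⟨j, hj0, hjr⟩ := (Finset.mem_filter.mp hmem).2
            by_cases hyj : y j = 0
            · have hphij : phiX F p hp R X f0 j ≠ 0 := fun h0 =>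
                hj0 (by rw [hy', Pi.sub_apply, hyj, h0, sub_zero])
              rw [hphidelta] at hphij
              have hM : invCountLe (⊤ : Subgroup G) (u : Subgroup G × L) ↑j ≠ 0 := fun h0 =>
                hphij (by rw [h0, Nat.cast_zero, mul_zero])
              have hje : j = u := (hanti _ _ hjr (invCountLe_ne_zero_relP hM)).symm
              rw [hje] at hj0
              exact hj0 hy'u
            · have hje : j = u := humax j
                (Finset.mem_filter.mpr ⟨Finset.mem_univ _, hyj⟩) hjr
              rw [hje] at hj0
              exact hj0 hy'u
          have humem : u ∈ Finset.univ.filter (fun k => ∃ j, y j ≠ 0 ∧ r k j) :=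
            Finset.mem_filter.mpr ⟨Finset.mem_univ _, ⟨u, hu0, hrefl u⟩⟩
          have hssub : Finset.univ.filter (fun k => ∃ j, y' j ≠ 0 ∧ r k j)
              ⊂ Finset.univ.filter (fun k => ∃ j, y j ≠ 0 ∧ r k j) :=
            ⟨hsub, fun hcon => hnotmem (hcon humem)⟩
          have hcard' : (Finset.univ.filter (fun k => ∃ j, y' j ≠ 0 ∧ r k j)).card ≤ n :=
            Nat.lt_succ_iff.mp (lt_of_lt_of_le (Finset.card_lt_card hssub) hcard)
          obtain ⟨f', hf'⟩ := ih y' hcard' hpsy'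
          refine ⟨f' + f0, ?_⟩
          rw [phiX_add F p hp R X, hf', hy']
          abel
    intro y hy
    exact hmain _ y le_rfl hy
  have hexact : Function.Exact (phiX F p hp R X) (psiX F p hp R X P) := by
    intro y
    constructor
    · intro h
      exact hker_range y h
    · rintro ⟨f, rfl⟩
      exact hpsi_phi f
  -- surjectivity of ψ
  have hpsidelta_self : ∀ (c : Zp p hp) (u : ↥(R.R ∩ X)),
      psiX F p hp R X P (fun k => if k = u then c else 0) u = Ideal.Quotient.mk _ c := by
    intro c u
    letI : Fintype (↥(P u) ⧸ u.1.1.subgroupOf (P u)) := Fintype.ofFinite _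
    rw [psiX_apply F p hp R X hXact hXS hA P hP]
    congr 1
    rw [finsum_eq_sum_of_fintype, Finset.sum_eq_single (QuotientGroup.mk 1)]
    · show (if repM F p R X hXact hXS hA P hP u (QuotientGroup.mk 1) = u then c else 0) = c
      rw [if_pos ((repM_eq_self_iff F p hp R X hXact hXS hA P hP u _).mpr rfl)]
    · intro q _ hqne
      show (if repM F p R X hXact hXS hA P hP u q = u then c else 0) = 0
      rw [if_neg]
      intro he
      exact hqne ((repM_eq_self_iff F p hp R X hXact hXS hA P hP u q).mp he)
    · intro h
      exact absurd (Finset.mem_univ _) h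
  have hpsidelta_ne : ∀ (c : Zp p hp) (u v : ↥(R.R ∩ X)),
      psiX F p hp R X P (fun k => if k = u then c else 0) v ≠ 0 → r v u := by
    intro c u v hne
    by_contra hnr
    apply hne
    rw [psiX_apply F p hp R X hXact hXS hA P hP]
    have hall : ∀ q : ↥(P v) ⧸ v.1.1.subgroupOf (P v),
        (fun k => if k = u then c else 0) (repM F p R X hXact hXS hA P hP v q)
          = (0 : Zp p hp) := by
      intro q
      show (if repM F p R X hXact hXS hA P hP v q = u then c else 0) = 0
      rw [if_neg]
      intro he
      apply hnr
      have hrel := relP_repM F p hp R X hXact hXS hA P hP v q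
      rw [he] at hrel
      exact hrel
    rw [finsum_congr hall, finsum_zero, map_zero]
  have hsurj : Function.Surjective (psiX F p hp R X P) := by
    have hmain : ∀ (n : ℕ)
        (b : ∀ u : ↥(R.R ∩ X),
          Zp p hp ⧸ Ideal.span {(sylCard p (WCardL (⊤ : Subgroup G) u.1) : Zp p hp)}),
        (Finset.univ.filter (fun k => ∃ j, b j ≠ 0 ∧ r k j)).card ≤ n →
        ∃ x, psiX F p hp R X P x = b := by
      intro n
      induction n with
      | zero =>
        intro b hcard
        refine ⟨0, ?_⟩
        rw [hpsizero]
        funext v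
        rw [Pi.zero_apply]
        by_contra hv
        have hmem : v ∈ Finset.univ.filter (fun k => ∃ j, b j ≠ 0 ∧ r k j) :=
          Finset.mem_filter.mpr ⟨Finset.mem_univ _, ⟨v, fun h => hv h.symm, hrefl v⟩⟩
        have := Finset.card_pos.mpr ⟨v, hmem⟩
        omega
      | succ n ih =>
        intro b hcard
        by_cases hz : ∀ v, b v = 0
        · refine ⟨0, ?_⟩
          rw [hpsizero]
          funext v
          rw [Pi.zero_apply, hz v]
        · have hsupp : (Finset.univ.filter (fun k : ↥(R.R ∩ X) => b k ≠ 0)).Nonempty := by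
            push_neg at hz
            obtain ⟨v, hv⟩ := hz
            exact ⟨v, Finset.mem_filter.mpr ⟨Finset.mem_univ _, hv⟩⟩
          obtain ⟨u, hu, humax⟩ :=
            exists_rel_maximal r htrans hanti _ (fun a _ => hrefl a) hsupp
          have hu0 : b u ≠ 0 := (Finset.mem_filter.mp hu).2
          obtain ⟨c, hc⟩ := Ideal.Quotient.mk_surjective (b u)
          set f0 : ↥(R.R ∩ X) → Zp p hp := fun k => if k = u then c else 0 with hf0
          set b' := b - psiX F p hp R X P f0 with hb'
          have hb'u : b' u = 0 := by
            rw [hb', Pi.sub_apply, hpsidelta_self c u, hc, sub_self]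
          have hsub : Finset.univ.filter (fun k => ∃ j, b' j ≠ 0 ∧ r k j)
              ⊆ Finset.univ.filter (fun k => ∃ j, b j ≠ 0 ∧ r k j) := by
            intro k hk
            obtain ⟨j, hj0, hjr⟩ := (Finset.mem_filter.mp hk).2
            by_cases hyj : b j = 0
            · have hphij : psiX F p hp R X P f0 j ≠ 0 := fun h0 =>
                hj0 (by rw [hb', Pi.sub_apply, hyj, h0, sub_zero])
              exact Finset.mem_filter.mpr ⟨Finset.mem_univ _,
                ⟨u, hu0, htrans _ _ _ hjr (hpsidelta_ne c u j hphij)⟩⟩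
            · exact Finset.mem_filter.mpr ⟨Finset.mem_univ _, ⟨j, hyj, hjr⟩⟩
          have hnotmem : u ∉ Finset.univ.filter (fun k => ∃ j, b' j ≠ 0 ∧ r k j) := by
            intro hmem
            obtain ⟨j, hj0, hjr⟩ := (Finset.mem_filter.mp hmem).2
            by_cases hyj : b j = 0
            · have hphij : psiX F p hp R X P f0 j ≠ 0 := fun h0 =>
                hj0 (by rw [hb', Pi.sub_apply, hyj, h0, sub_zero])
              have hje : j = u := (hanti _ _ hjr (hpsidelta_ne c u j hphij)).symm
              rw [hje] at hj0
              exact hj0 hb'u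
            · have hje : j = u := humax j
                (Finset.mem_filter.mpr ⟨Finset.mem_univ _, hyj⟩) hjr
              rw [hje] at hj0
              exact hj0 hb'u
          have humem : u ∈ Finset.univ.filter (fun k => ∃ j, b j ≠ 0 ∧ r k j) :=
            Finset.mem_filter.mpr ⟨Finset.mem_univ _, ⟨u, hu0, hrefl u⟩⟩
          have hssub : Finset.univ.filter (fun k => ∃ j, b' j ≠ 0 ∧ r k j)
              ⊂ Finset.univ.filter (fun k => ∃ j, b j ≠ 0 ∧ r k j) :=
            ⟨hsub, fun hcon => hnotmem (hcon humem)⟩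
          have hcard' : (Finset.univ.filter (fun k => ∃ j, b' j ≠ 0 ∧ r k j)).card ≤ n :=
            Nat.lt_succ_iff.mp (lt_of_lt_of_le (Finset.card_lt_card hssub) hcard)
          obtain ⟨x', hx'⟩ := ih b' hcard'
          refine ⟨x' + f0, ?_⟩
          rw [hpsi_add, hx', hb']
          abel
    intro b
    exact hmain _ b le_rfl
  -- the subalgebra
  obtain ⟨f1, hf1⟩ := hker_range (fun _ => 1) (psiX_one F p hp R X hXact hXS hA P hP)
  refine ⟨hinj, hexact, hsurj, ?_⟩
  refine ⟨⟨⟨⟨⟨Set.range (phiX F p hp R X), ?_⟩, ?_⟩, ?_, ?_⟩, ?_⟩, rfl⟩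
  · rintro x y ⟨f, rfl⟩ ⟨f', rfl⟩
    exact hker_range _ (psiX_phiX_mul F p hp R X hXact hXS hA P hP f f')
  · exact ⟨f1, hf1⟩
  · rintro x y ⟨f, rfl⟩ ⟨f', rfl⟩
    exact ⟨f + f', phiX_add F p hp R X f f'⟩
  · exact ⟨0, phiX_zero F p hp R X⟩
  · intro c
    refine ⟨c • f1, ?_⟩
    rw [phiX_smul F p hp R X, hf1]
    funext v
    simp only [Pi.smul_apply, smul_eq_mul, mul_one, Pi.algebraMap_apply,
      Algebra.algebraMap_self, RingHom.id_apply]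

end
end LB
end
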